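/- arXiv:2211.08175 — 7 statements merged into one kernel-verified Lean document; each statement's English description precedes it below -/
import Mathlib

section
/- Let C ⊆ ℝ³ be a strictly convex cone such that C ∩ (ℝ²×{0}) = {0}. Let M : ℝ³ → ℝ³ be a linear map such that M maps ℝ²×{0} into ℝ²×{0} and M(0,0,1) = (0,0,1). Let D ⊆ ℝ²×{0} be a strictly convex cone. Then C ∩ ker(M) = {0}, and the smallest convex cone containing M(C) ∪ D is strictly convex. -/
open Set

/-- A cone: a set closed under multiplication by non-negative real scalars. -/
def IsCone {E : Type*} [AddCommGroup E] [Module ℝ E] (C : Set E) : Prop :=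
  ∀ r : ℝ, 0 ≤ r → ∀ v ∈ C, r • v ∈ C

/-- A strictly convex cone: a convex cone `C` with `C ∩ (−C) = {0}`. -/
def IsStrictlyConvexCone {E : Type*} [AddCommGroup E] [Module ℝ E] (C : Set E) : Prop :=
  IsCone C ∧ Convex ℝ C ∧ C ∩ (-C) = {0}

/-- The smallest convex cone containing a given set. -/
def coneHull {E : Type*} [AddCommGroup E] [Module ℝ E] (s : Set E) : Set E :=
  ⋂₀ {C : Set E | IsCone C ∧ Convex ℝ C ∧ s ⊆ C}

/-- Let `C ⊆ ℝ³` be a strictly convex cone such that `C ∩ (ℝ²×{0}) = {0}`.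
Let `M : ℝ³ → ℝ³` be a linear map mapping `ℝ²×{0}` into `ℝ²×{0}` with `M(0,0,1) = (0,0,1)`.
Let `D ⊆ ℝ²×{0}` be a strictly convex cone. Then `C ∩ ker M = {0}` and the smallest
convex cone containing `M(C) ∪ D` is strictly convex. -/
theorem stmt0
    (C : Set (Fin 3 → ℝ))
    (hC : IsStrictlyConvexCone C)
    (hCplane : C ∩ {v : Fin 3 → ℝ | v 2 = 0} = {0})
    (M : (Fin 3 → ℝ) →ₗ[ℝ] (Fin 3 → ℝ))
    (hMplane : ∀ v : Fin 3 → ℝ, v 2 = 0 → (M v) 2 = 0)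
    (hMe3 : M (Pi.single (2 : Fin 3) (1 : ℝ)) = Pi.single (2 : Fin 3) (1 : ℝ))
    (D : Set (Fin 3 → ℝ))
    (hD : IsStrictlyConvexCone D)
    (hDplane : D ⊆ {v : Fin 3 → ℝ | v 2 = 0}) :
    C ∩ (LinearMap.ker M : Set (Fin 3 → ℝ)) = {0} ∧
      IsStrictlyConvexCone (coneHull (M '' C ∪ D)) := by
  obtain ⟨hCcone, hCconv, hCpt⟩ := hC
  obtain ⟨hDcone, hDconv, hDpt⟩ := hD
  have h0C : (0 : Fin 3 → ℝ) ∈ C := by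
    have h : (0 : Fin 3 → ℝ) ∈ C ∩ (-C) := by rw [hCpt]; exact rfl
    exact h.1
  have h0D : (0 : Fin 3 → ℝ) ∈ D := by
    have h : (0 : Fin 3 → ℝ) ∈ D ∩ (-D) := by rw [hDpt]; exact rfl
    exact h.1
  -- key: M preserves the last coordinate
  have hM2 : ∀ v : Fin 3 → ℝ, (M v) 2 = v 2 := by
    intro v
    set e3 : Fin 3 → ℝ := Pi.single (2 : Fin 3) (1 : ℝ) with he3
    set w : Fin 3 → ℝ := v - v 2 • e3 with hwdef
    have hw : w 2 = 0 := by simp [hwdef, he3]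
    have hMv : M v = M w + v 2 • M e3 := by
      rw [← map_smul, ← map_add]; congr 1; rw [hwdef]; abel
    rw [hMv, hMe3]
    have hh := hMplane _ hw
    simp [hh, he3]
  -- sums in C stay in C
  have hCadd : ∀ c ∈ C, ∀ c' ∈ C, c + c' ∈ C := by
    intro c hc c' hc'
    have h2 : ((1:ℝ)/2) • c + ((1:ℝ)/2) • c' ∈ C :=
      hCconv hc hc' (by norm_num) (by norm_num) (by norm_num)
    have := hCcone 2 (by norm_num) _ h2
    have he : (2:ℝ) • (((1:ℝ)/2) • c + ((1:ℝ)/2) • c') = c + c' := by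
      rw [smul_add, smul_smul, smul_smul]; norm_num
    rwa [he] at this
  have hDadd : ∀ d ∈ D, ∀ d' ∈ D, d + d' ∈ D := by
    intro c hc c' hc'
    have h2 : ((1:ℝ)/2) • c + ((1:ℝ)/2) • c' ∈ D :=
      hDconv hc hc' (by norm_num) (by norm_num) (by norm_num)
    have := hDcone 2 (by norm_num) _ h2
    have he : (2:ℝ) • (((1:ℝ)/2) • c + ((1:ℝ)/2) • c') = c + c' := by
      rw [smul_add, smul_smul, smul_smul]; norm_num
    rwa [he] at this
  -- Part 1
  have part1 : C ∩ (LinearMap.ker M : Set (Fin 3 → ℝ)) = {0} := by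
    apply Subset.antisymm
    · rintro v ⟨hvC, hvK⟩
      have hMv : M v = 0 := hvK
      have h2 : v 2 = 0 := by rw [← hM2 v, hMv]; rfl
      have h : v ∈ C ∩ {v : Fin 3 → ℝ | v 2 = 0} := ⟨hvC, h2⟩
      rw [hCplane] at h; exact h
    · rintro v hv
      rw [mem_singleton_iff] at hv; subst hv
      exact ⟨h0C, by simp⟩
  refine ⟨part1, ?_, ?_, ?_⟩
  · -- coneHull is a cone
    intro r hr v hv T hT
    exact hT.1 r hr v (hv T hT)
  · -- coneHull is convex
    exact convex_sInter (fun T hT => hT.2.1)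
  · -- pointedness
    set S : Set (Fin 3 → ℝ) := {x | ∃ c ∈ C, ∃ d ∈ D, x = M c + d} with hSdef
    have hSmem : S ∈ {T : Set (Fin 3 → ℝ) | IsCone T ∧ Convex ℝ T ∧ M '' C ∪ D ⊆ T} := by
      refine ⟨?_, ?_, ?_⟩
      · rintro r hr v ⟨c, hc, d, hd, rfl⟩
        exact ⟨r • c, hCcone r hr c hc, r • d, hDcone r hr d hd, by
          rw [map_smul, smul_add]⟩
      · rintro x ⟨c, hc, d, hd, rfl⟩ y ⟨c', hc', d', hd', rfl⟩ a b ha hb hab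
        refine ⟨a • c + b • c', hCconv hc hc' ha hb hab,
          a • d + b • d', hDconv hd hd' ha hb hab, ?_⟩
        rw [map_add, map_smul, map_smul]
        module
      · rintro x (⟨c, hc, rfl⟩ | hx)
        · exact ⟨c, hc, 0, h0D, by simp⟩
        · exact ⟨0, h0C, x, hx, by simp⟩
    have hsub : coneHull (M '' C ∪ D) ⊆ S := sInter_subset_of_mem hSmem
    apply Subset.antisymm
    · rintro x ⟨hx, hxn⟩
      have hnx : -x ∈ coneHull (M '' C ∪ D) := hxn
      obtain ⟨c, hc, d, hd, hxe⟩ := hsub hx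
      obtain ⟨c', hc', d', hd', hxe'⟩ := hsub hnx
      have hsum : M (c + c') + (d + d') = 0 := by
        have h : (M c + d) + (M c' + d') = 0 := by
          rw [← hxe, ← hxe', add_neg_cancel]
        calc M (c + c') + (d + d') = (M c + d) + (M c' + d') := by
              rw [map_add]; abel
          _ = 0 := h
      have hcc : (c + c') 2 = 0 := by
        have h2 : (M (c + c') + (d + d')) 2 = 0 := by rw [hsum]; rfl
        have := hM2 (c + c')
        have hd2 : d 2 = 0 := hDplane hd
        have hd'2 : d' 2 = 0 := hDplane hd'
        simp only [Pi.add_apply] at h2 ⊢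
        simp only [Pi.add_apply] at this
        linarith [h2, this]
      have hcc0 : c + c' = 0 := by
        have h : c + c' ∈ C ∩ {v : Fin 3 → ℝ | v 2 = 0} :=
          ⟨hCadd c hc c' hc', hcc⟩
        rwa [hCplane] at h
      have hc0 : c = 0 := by
        have hneg : c ∈ -C := by
          rw [mem_neg]
          rwa [neg_eq_of_add_eq_zero_right hcc0]
        have h : c ∈ C ∩ (-C) := ⟨hc, hneg⟩
        rwa [hCpt] at h
      have hc'0 : c' = 0 := by
        rw [hc0, zero_add] at hcc0; exact hcc0
      have hdd0 : d + d' = 0 := by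
        rw [hc0, hc'0] at hsum; simpa using hsum
      have hd0 : d = 0 := by
        have hneg : d ∈ -D := by
          rw [mem_neg]
          rwa [neg_eq_of_add_eq_zero_right hdd0]
        have h : d ∈ D ∩ (-D) := ⟨hd, hneg⟩
        rwa [hDpt] at h
      rw [hxe, hc0, hd0]
      simp
    · rintro x hx
      rw [mem_singleton_iff] at hx; subst hx
      have h0 : (0 : Fin 3 → ℝ) ∈ coneHull (M '' C ∪ D) := by
        intro T hT
        exact hT.2.2 (Or.inl ⟨0, h0C, map_zero M⟩)
      exact ⟨h0, by simpa using h0⟩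
end

section
/- For any additive total order ⪯ on ℚⁿ, there exist an integer s ≥ 1 and non-zero pairwise orthogonal vectors u₁, …, u_s ∈ ℝⁿ such that d(u₁) + … + d(u_s) = n and the map ι : ℚⁿ → ℝˢ defined by ι(v) = (v·u₁, …, v·u_s) is injective and order-preserving from (ℚⁿ, ⪯) to ℝˢ equipped with the lexicographic order. -/
namespace Robbiano

variable {n : ℕ}

abbrev M (n : ℕ) := Fin n → ℚ

structure Good (r : M n → M n → Prop) : Prop where
  refl : ∀ a, r a a
  trans : ∀ a b c, r a b → r b c → r a c
  antisymm : ∀ a b, r a b → r b a → a = b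
  total : ∀ a b, r a b ∨ r b a
  add : ∀ a b c, r a b → r (a + c) (b + c)

namespace Good

variable {r : M n → M n → Prop} (h : Good r)
include h

lemma addl {a b : M n} (c : M n) (hab : r a b) : r (c + a) (c + b) := by
  rw [add_comm c a, add_comm c b]; exact h.add a b c hab

lemma neg {a b : M n} (hab : r a b) : r (-b) (-a) := by
  have := h.add a b (-a - b) hab
  rw [show a + (-a - b) = -b by abel, show b + (-a - b) = -a by abel] at this
  exact this

lemma sub_nonneg {a b : M n} (hab : r a b) : r 0 (b - a) := by
  have := h.add a b (-a) hab
  rwa [add_neg_cancel, ← sub_eq_add_neg] at this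

lemma of_sub_nonneg {a b : M n} (hab : r 0 (b - a)) : r a b := by
  have := h.add 0 (b - a) a hab
  rwa [zero_add, sub_add_cancel] at this

lemma add_add {a b c d : M n} (h1 : r a b) (h2 : r c d) : r (a + c) (b + d) :=
  h.trans _ _ _ (h.add a b c h1) (h.addl b h2)

lemma sum_le_sum {ι : Type*} (s : Finset ι) (x y : ι → M n)
    (hxy : ∀ i ∈ s, r (x i) (y i)) : r (∑ i ∈ s, x i) (∑ i ∈ s, y i) := by
  classical
  induction s using Finset.induction_on with
  | empty => simpa using h.refl 0
  | insert a s hni ih =>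
      rw [Finset.sum_insert hni, Finset.sum_insert hni]
      exact h.add_add (hxy a (Finset.mem_insert_self a s))
        (ih fun i hi => hxy i (Finset.mem_insert_of_mem hi))

lemma sum_nonneg {ι : Type*} (s : Finset ι) (x : ι → M n)
    (hx : ∀ i ∈ s, r 0 (x i)) : r 0 (∑ i ∈ s, x i) := by
  have := h.sum_le_sum s 0 x hx
  simpa using this

lemma nsmul_nonneg {v : M n} (hv : r 0 v) (k : ℕ) : r 0 ((k : ℚ) • v) := by
  induction k with
  | zero => simpa using h.refl 0
  | succ m ih =>
      have := h.add_add ih hv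
      rw [zero_add] at this
      rw [show ((m+1 : ℕ) : ℚ) = (m:ℚ)+1 by push_cast; ring, add_smul, one_smul]
      exact this

lemma smul_nonneg {q : ℚ} (hq : 0 ≤ q) {v : M n} (hv : r 0 v) : r 0 (q • v) := by
  rcases h.total 0 (q • v) with h1 | h1
  · exact h1
  · -- show q • v = 0
    rcases eq_or_lt_of_le hq with rfl | hq
    · simpa using h.refl 0
    have ha : r 0 ((q.num.toNat : ℚ) • v) := h.nsmul_nonneg hv _
    have hb : r 0 ((q.den : ℚ) • (-(q • v))) := h.nsmul_nonneg (by simpa using h.neg h1) _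
    have hnum : ((q.num.toNat : ℚ)) = q * q.den := by
      have h1 : (q.num : ℚ) = q * q.den := by
        rw [Rat.mul_den_eq_num]
      rw [← h1]
      norm_cast
      exact Int.toNat_of_nonneg (le_of_lt (Rat.num_pos.2 hq))
    have hb' : r 0 (-(((q.num.toNat : ℚ)) • v)) := by
      convert hb using 1
      rw [hnum]
      module
    have : ((q.num.toNat : ℚ)) • v = 0 :=
      h.antisymm _ _ (by simpa using h.neg hb') ha
    have hv0 : v = 0 := by
      have hq0 : ((q.num.toNat : ℚ)) ≠ 0 := by
        have h2 := Rat.num_pos.2 hq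
        have h3 : 0 < q.num.toNat := by omega
        exact_mod_cast h3.ne'
    -- fix
      exact (smul_eq_zero.1 this).resolve_left hq0
    rw [hv0, smul_zero]
    exact h.refl 0

lemma smul_mono {q : ℚ} (hq : 0 ≤ q) {a b : M n} (hab : r a b) : r (q • a) (q • b) := by
  have := h.smul_nonneg hq (h.sub_nonneg hab)
  rw [smul_sub] at this
  exact h.of_sub_nonneg this

lemma smul_e_mono {e : M n} (he : r 0 e) {q q' : ℚ} (hq : q ≤ q') : r (q • e) (q' • e) := by
  have := h.smul_nonneg (by linarith : (0:ℚ) ≤ q' - q) he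
  apply h.of_sub_nonneg
  rwa [show q' • e - q • e = (q' - q) • e by module]

lemma le_of_smul_e {e : M n} (he : r 0 e) (hne : e ≠ 0) {q q' : ℚ}
    (hle : r (q • e) (q' • e)) : q ≤ q' := by
  by_contra hlt
  push_neg at hlt
  have h1 : r 0 ((q - q') • e) := h.smul_nonneg (by linarith) he
  have h2 : r ((q - q') • e) 0 := by
    have := h.sub_nonneg hle
    have := h.neg this
    simpa [show -(q' • e - q • e) = (q - q') • e by module] using this
  have h3 : (q - q') • e = 0 := h.antisymm _ _ h2 h1
  rcases smul_eq_zero.1 h3 with h4 | h4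
  · exact absurd h4 (by intro hh; linarith [sub_eq_zero.1 hh] )
  · exact hne h4

end Good

/-- componentwise cast to ℝ -/
def coeR {n : ℕ} (v : M n) : Fin n → ℝ := fun k => (v k : ℝ)

lemma coeR_mem_span {n m : ℕ} (b : Fin m → M n) {v : M n}
    (hv : v ∈ Submodule.span ℚ (Set.range b)) :
    coeR v ∈ Submodule.span ℝ (Set.range fun j => coeR (b j)) := by
  obtain ⟨c, rfl⟩ := (Submodule.mem_span_range_iff_exists_fun ℚ).1 hv
  have : coeR (∑ i, c i • b i) = ∑ i, ((c i : ℝ)) • coeR (b i) := by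
    funext k
    simp only [coeR, Finset.sum_apply, Pi.smul_apply, smul_eq_mul]
    push_cast
    ring
  rw [this]
  exact Submodule.sum_mem _ fun i _ =>
    Submodule.smul_mem _ _ (Submodule.subset_span (Set.mem_range_self i))

lemma orth_span {n : ℕ} (x : Fin n → ℝ) (S : Set (Fin n → ℝ))
    (hS : ∀ y ∈ S, ∑ k, y k * x k = 0) :
    ∀ z ∈ Submodule.span ℝ S, ∑ k, z k * x k = 0 := by
  intro z hz
  induction hz using Submodule.span_induction with
  | mem y hy => exact hS y hy
  | zero => simp
  | add y w _ _ hy hw =>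
      have : ∑ k, (y + w) k * x k = (∑ k, y k * x k) + ∑ k, w k * x k := by
        rw [← Finset.sum_add_distrib]
        exact Finset.sum_congr rfl fun k _ => by simp [add_mul]
      rw [this, hy, hw, add_zero]
  | smul a y _ hy =>
      have : ∑ k, (a • y) k * x k = a * ∑ k, y k * x k := by
        rw [Finset.mul_sum]
        exact Finset.sum_congr rfl fun k _ => by simp [mul_assoc]
      rw [this, hy, mul_zero]

lemma lex_lt_head {s : ℕ} {x y : Fin (s+1) → ℝ} (hx : x 0 < y 0) : toLex x < toLex y :=
  ⟨0, fun j hj => absurd hj (by simp), hx⟩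

lemma lex_lt_tail {s : ℕ} {x y : Fin (s+1) → ℝ} (h0 : x 0 = y 0)
    (ht : toLex (x ∘ Fin.succ) < toLex (y ∘ Fin.succ)) : toLex x < toLex y := by
  obtain ⟨i, hi, hlt⟩ := ht
  refine ⟨i.succ, fun j hj => ?_, hlt⟩
  cases j using Fin.cases with
  | zero => exact h0
  | succ jj => exact hi jj (by simpa [Fin.succ_lt_succ_iff] using hj)

namespace Good
section Step

variable {n m : ℕ} (r : M n → M n → Prop) (b : Fin m → M n)

open Classical in
/-- sign of b i -/
noncomputable def sg (i : Fin m) : ℚ := if r 0 (b i) then 1 else -1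

/-- the reference positive element -/
noncomputable def ee : M n := ∑ i, sg r b i • b i


/-- the cut set -/
def SS (v : M n) : Set ℝ := {x | ∃ q : ℚ, r (q • ee r b) v ∧ (q : ℝ) = x}

/-- the functional -/
noncomputable def ff (v : M n) : ℝ := sSup (SS r b v)

variable {r} {b} (h : Good r)
include h

lemma sg_smul_nonneg (i : Fin m) : r 0 (sg r b i • b i) := by
  unfold sg
  split
  · simpa
  · rename_i hneg
    rcases h.total 0 (b i) with h1 | h1
    · exact absurd h1 hneg
    · have := h.neg h1
      simpa using this

lemma le_sg (i : Fin m) : r (b i) (sg r b i • b i) := by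
  unfold sg
  split
  · simpa using h.refl (b i)
  · rename_i hneg
    rcases h.total 0 (b i) with h1 | h1
    · exact absurd h1 hneg
    · have h2 := h.neg h1
      simp only [neg_zero] at h2
      have := h.trans _ _ _ h1 h2
      simpa using this

lemma neg_le_sg (i : Fin m) : r (-(b i)) (sg r b i • b i) := by
  unfold sg
  split
  · rename_i hpos
    have h2 := h.neg hpos
    simp only [neg_zero] at h2
    simpa using h.trans _ _ _ h2 hpos
  · rename_i hneg
    rcases h.total 0 (b i) with h1 | h1
    · exact absurd h1 hneg
    · simpa using h.refl (-(b i))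

lemma smul_le_abs (q : ℚ) (i : Fin m) : r (q • b i) (|q| • (sg r b i • b i)) := by
  rcases le_or_gt 0 q with hq | hq
  · rw [abs_of_nonneg hq]
    exact h.smul_mono hq (h.le_sg i)
  · rw [abs_of_neg hq]
    have := h.smul_mono (by linarith : (0:ℚ) ≤ -q) (neg_le_sg (b := b) h i)
    rwa [show (-q) • (-(b i)) = q • b i by module] at this

lemma ee_nonneg : r 0 (ee r b) :=
  h.sum_nonneg Finset.univ _ fun i _ => h.sg_smul_nonneg i

lemma ee_mem : ee r b ∈ Submodule.span ℚ (Set.range b) :=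
  Submodule.sum_mem _ fun i _ =>
    Submodule.smul_mem _ _ (Submodule.subset_span (Set.mem_range_self i))

lemma sg_le_ee (i : Fin m) : r (sg r b i • b i) (ee r b) := by
  apply h.of_sub_nonneg
  have : ee r b - sg r b i • b i = ∑ j ∈ Finset.univ.erase i, sg r b j • b j := by
    unfold ee
    rw [← Finset.add_sum_erase _ _ (Finset.mem_univ i)]
    abel
  rw [this]
  exact h.sum_nonneg _ _ fun j _ => h.sg_smul_nonneg j

lemma upper {v : M n} (hv : v ∈ Submodule.span ℚ (Set.range b)) :
    ∃ Q : ℚ, r v (Q • ee r b) := by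
  obtain ⟨c, rfl⟩ := (Submodule.mem_span_range_iff_exists_fun ℚ).1 hv
  refine ⟨∑ i, |c i|, ?_⟩
  have h1 : r (∑ i, c i • b i) (∑ i, |c i| • (sg r b i • b i)) :=
    h.sum_le_sum _ _ _ fun i _ => h.smul_le_abs (c i) i
  have h2 : r (∑ i, |c i| • (sg r b i • b i)) (∑ i, |c i| • ee r b) :=
    h.sum_le_sum _ _ _ fun i _ => h.smul_mono (abs_nonneg _) (h.sg_le_ee i)
  have h3 : (∑ i, |c i| • ee r b) = (∑ i, |c i|) • ee r b := by
    rw [Finset.sum_smul]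
  exact h.trans _ _ _ h1 (h3 ▸ h2)

lemma lower {v : M n} (hv : v ∈ Submodule.span ℚ (Set.range b)) :
    ∃ q : ℚ, r (q • ee r b) v := by
  obtain ⟨Q, hQ⟩ := h.upper (Submodule.neg_mem _ hv : -v ∈ _)
  refine ⟨-Q, ?_⟩
  have := h.neg hQ
  rwa [neg_neg, ← neg_smul] at this

lemma ee_ne (hb : LinearIndependent ℚ b) (hm : m ≠ 0) : ee r b ≠ 0 := by
  intro h0
  obtain ⟨i⟩ : Nonempty (Fin m) := ⟨⟨0, Nat.pos_of_ne_zero hm⟩⟩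
  have hz := Fintype.linearIndependent_iff.1 hb (fun i => sg r b i) (by simpa [ee] using h0) i
  unfold sg at hz
  by_cases hri : r 0 (b i) <;> simp [hri] at hz



variable (hb : LinearIndependent ℚ b) (hm : m ≠ 0)

lemma SS_nonempty {v : M n} (hv : v ∈ Submodule.span ℚ (Set.range b)) :
    (SS r b v).Nonempty := by
  obtain ⟨q, hq⟩ := h.lower hv
  exact ⟨(q : ℝ), q, hq, rfl⟩

include hb hm in
lemma SS_bddAbove {v : M n} (hv : v ∈ Submodule.span ℚ (Set.range b)) :
    BddAbove (SS r b v) := by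
  obtain ⟨Q, hQ⟩ := h.upper hv
  refine ⟨(Q : ℝ), ?_⟩
  rintro x ⟨q, hq, rfl⟩
  have : r (q • ee r b) (Q • ee r b) := h.trans _ _ _ hq hQ
  exact_mod_cast h.le_of_smul_e (h.ee_nonneg) (ee_ne h hb hm) this

include hb hm in
lemma ff_ge {v : M n} (hv : v ∈ Submodule.span ℚ (Set.range b)) {q : ℚ}
    (hq : r (q • ee r b) v) : (q : ℝ) ≤ ff r b v :=
  le_csSup (h.SS_bddAbove hb hm hv) ⟨q, hq, rfl⟩

include hb hm in
lemma ff_le {v : M n} (hv : v ∈ Submodule.span ℚ (Set.range b)) {q : ℚ}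
    (hq : r v (q • ee r b)) : ff r b v ≤ (q : ℝ) := by
  apply csSup_le (h.SS_nonempty hv)
  rintro x ⟨p, hp, rfl⟩
  have : r (p • ee r b) (q • ee r b) := h.trans _ _ _ hp hq
  exact_mod_cast h.le_of_smul_e (h.ee_nonneg) (ee_ne h hb hm) this

include hb hm in
lemma lt_ff {v : M n} (hv : v ∈ Submodule.span ℚ (Set.range b)) {q : ℚ}
    (hq : ff r b v < (q : ℝ)) : r v (q • ee r b) := by
  rcases h.total v (q • ee r b) with h1 | h1
  · exact h1
  · exact absurd (h.ff_ge hb hm hv h1) (not_le.2 hq)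

include hb hm in
lemma ff_add {v w : M n} (hv : v ∈ Submodule.span ℚ (Set.range b))
    (hw : w ∈ Submodule.span ℚ (Set.range b)) :
    ff r b (v + w) = ff r b v + ff r b w := by
  have hvw : v + w ∈ Submodule.span ℚ (Set.range b) := Submodule.add_mem _ hv hw
  apply le_antisymm
  · apply csSup_le (h.SS_nonempty hvw)
    rintro x ⟨q, hq, rfl⟩
    by_contra hgt
    push_neg at hgt
    obtain ⟨a, ha1, ha2⟩ := exists_rat_btwn (show ff r b v < (q : ℝ) - ff r b w by linarith)
    obtain ⟨c, hc1, hc2⟩ := exists_rat_btwn (show ff r b w < (q : ℝ) - (a:ℝ) by linarith)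
    have hva : r v (a • ee r b) := h.lt_ff hb hm hv ha1
    have hwc : r w (c • ee r b) := h.lt_ff hb hm hw hc1
    have hsum : r (v + w) ((a + c) • ee r b) := by
      have := h.add_add hva hwc
      rwa [show a • ee r b + c • ee r b = (a + c) • ee r b by module] at this
    have hle : q ≤ a + c :=
      h.le_of_smul_e (h.ee_nonneg) (ee_ne h hb hm) (h.trans _ _ _ hq hsum)
    have : (q : ℝ) ≤ (a : ℝ) + (c : ℝ) := by exact_mod_cast hle
    linarith
  · rw [← le_sub_iff_add_le]
    apply csSup_le (h.SS_nonempty hv)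
    rintro x ⟨q, hq, rfl⟩
    rw [le_sub_comm]
    apply csSup_le (h.SS_nonempty hw)
    rintro y ⟨p, hp, rfl⟩
    rw [le_sub_iff_add_le']
    have : r ((q + p) • ee r b) (v + w) := by
      have := h.add_add hq hp
      rwa [show q • ee r b + p • ee r b = (q + p) • ee r b by module] at this
    have := h.ff_ge hb hm hvw this
    push_cast at this ⊢
    linarith

include hb hm in
lemma ff_zero : ff r b 0 = 0 := by
  apply le_antisymm
  · have := h.ff_le hb hm (Submodule.zero_mem _) (q := 0) (by simpa using h.refl 0)
    simpa using this
  · have := h.ff_ge hb hm (Submodule.zero_mem _) (q := 0) (by simpa using h.refl 0)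
    simpa using this

include hb hm in
lemma ff_neg {v : M n} (hv : v ∈ Submodule.span ℚ (Set.range b)) :
    ff r b (-v) = - ff r b v := by
  have := h.ff_add hb hm hv (Submodule.neg_mem _ hv)
  rw [add_neg_cancel, h.ff_zero hb hm] at this
  linarith

include hb hm in
lemma ff_smul_pos {q : ℚ} (hq : 0 < q) {v : M n} (hv : v ∈ Submodule.span ℚ (Set.range b)) :
    ff r b (q • v) = (q : ℝ) * ff r b v := by
    have hqv : q • v ∈ Submodule.span ℚ (Set.range b) := Submodule.smul_mem _ _ hv
    apply le_antisymm
    · apply csSup_le (h.SS_nonempty hqv)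
      rintro x ⟨p, hp, rfl⟩
      have h1 : r ((p / q) • ee r b) v := by
        have := h.smul_mono (le_of_lt (by positivity : (0:ℚ) < q⁻¹)) hp
        rwa [show q⁻¹ • (p • ee r b) = (p / q) • ee r b by rw [smul_smul]; ring_nf,
          show q⁻¹ • (q • v) = v by rw [smul_smul]; field_simp; exact one_smul _ _] at this
      have h2 := h.ff_ge hb hm hv h1
      push_cast at h2
      rw [div_le_iff₀ (by exact_mod_cast hq : (0:ℝ) < (q:ℝ))] at h2
      linarith [h2]
    · rw [mul_comm, ← le_div_iff₀ (by exact_mod_cast hq : (0:ℝ) < (q:ℝ))]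
      apply csSup_le (h.SS_nonempty hv)
      rintro x ⟨p, hp, rfl⟩
      have h1 : r ((q * p) • ee r b) (q • v) := by
        have := h.smul_mono (le_of_lt hq) hp
        rwa [show q • (p • ee r b) = (q * p) • ee r b by rw [smul_smul]] at this
      have h2 := h.ff_ge hb hm hqv h1
      rw [le_div_iff₀ (by exact_mod_cast hq : (0:ℝ) < (q:ℝ))]
      push_cast at h2
      nlinarith [h2]

include hb hm in
lemma ff_smul (q : ℚ) {v : M n} (hv : v ∈ Submodule.span ℚ (Set.range b)) :
    ff r b (q • v) = (q : ℝ) * ff r b v := by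
  rcases lt_trichotomy q 0 with hq | rfl | hq
  · have h1 := h.ff_smul_pos hb hm (show (0:ℚ) < -q by linarith) hv
    have h2 : q • v = -((-q) • v) := by module
    rw [h2, h.ff_neg hb hm (Submodule.smul_mem _ _ hv), h1]
    push_cast
    ring
  · simpa using h.ff_zero hb hm
  · exact h.ff_smul_pos hb hm hq hv

include hb hm in
lemma ff_ee : ff r b (ee r b) = 1 := by
  apply le_antisymm
  · have := h.ff_le hb hm (ee_mem h) (q := 1) (by simpa using h.refl (ee r b))
    simpa using this
  · have := h.ff_ge hb hm (ee_mem h) (q := 1) (by simpa using h.refl (ee r b))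
    simpa using this

include hb hm in
lemma ff_nonneg {v : M n} (hv : v ∈ Submodule.span ℚ (Set.range b)) (hpos : r 0 v) :
    0 ≤ ff r b v := by
  have := h.ff_ge hb hm hv (q := 0) (by simpa using hpos)
  simpa using this

include hb hm in
lemma ff_sum {ι : Type*} (s : Finset ι) (c : ι → ℚ) (w : ι → M n)
    (hw : ∀ i ∈ s, w i ∈ Submodule.span ℚ (Set.range b)) :
    ff r b (∑ i ∈ s, c i • w i) = ∑ i ∈ s, (c i : ℝ) * ff r b (w i) := by
  classical
  induction s using Finset.induction_on with
  | empty => simpa using h.ff_zero hb hm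
  | insert a t hni ih =>
      have hmem : ∑ i ∈ t, c i • w i ∈ Submodule.span ℚ (Set.range b) :=
        Submodule.sum_mem _ fun i hi =>
          Submodule.smul_mem _ _ (hw i (Finset.mem_insert_of_mem hi))
      rw [Finset.sum_insert hni, Finset.sum_insert hni,
        h.ff_add hb hm (Submodule.smul_mem _ _ (hw a (Finset.mem_insert_self a t))) hmem,
        h.ff_smul hb hm _ (hw a (Finset.mem_insert_self a t)),
        ih fun i hi => hw i (Finset.mem_insert_of_mem hi)]

end Step

section Gram

variable {n m : ℕ}

/-- Gram matrix -/
def GG (b : Fin m → M n) : Matrix (Fin m) (Fin m) ℚ := Matrix.of fun i j => ∑ k, b i k * b j k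

/-- dual basis -/
noncomputable def bt (b : Fin m → M n) (i : Fin m) : M n := ∑ j, (GG b)⁻¹ i j • b j

lemma GG_det {b : Fin m → M n} (hb : LinearIndependent ℚ b) : (GG b).det ≠ 0 := by
  intro h0
  obtain ⟨x, hx0, hGx⟩ := Matrix.exists_mulVec_eq_zero_iff.2 h0
  set y : M n := ∑ i, x i • b i with hy
  have h1 : ∀ k, y k = ∑ i, x i * b i k := by
    intro k
    simp [hy, Finset.sum_apply]
  have hterm : ∀ i, x i * ((GG b).mulVec x i) = ∑ j, ∑ k, x i * x j * (b i k * b j k) := by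
    intro i
    rw [Matrix.mulVec, dotProduct, Finset.mul_sum]
    refine Finset.sum_congr rfl fun j _ => ?_
    rw [show GG b i j = ∑ k, b i k * b j k from rfl, Finset.sum_mul, Finset.mul_sum]
    exact Finset.sum_congr rfl fun k _ => by ring
  have h2 : ∑ k, y k * y k = ∑ i, x i * ((GG b).mulVec x i) := by
    calc ∑ k, y k * y k
        = ∑ k, ∑ i, ∑ j, x i * x j * (b i k * b j k) := by
          refine Finset.sum_congr rfl fun k _ => ?_
          rw [h1 k, Finset.sum_mul_sum]
          exact Finset.sum_congr rfl fun i _ => Finset.sum_congr rfl fun j _ => by ring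
      _ = ∑ i, ∑ k, ∑ j, x i * x j * (b i k * b j k) := Finset.sum_comm
      _ = ∑ i, ∑ j, ∑ k, x i * x j * (b i k * b j k) :=
          Finset.sum_congr rfl fun i _ => Finset.sum_comm
      _ = ∑ i, x i * ((GG b).mulVec x i) :=
          (Finset.sum_congr rfl fun i _ => (hterm i).symm)
  have h3 : ∑ k, y k * y k = 0 := by
    rw [h2]
    simp [hGx]
  have h4 : y = 0 := by
    funext k
    exact mul_self_eq_zero.1
      ((Finset.sum_eq_zero_iff_of_nonneg fun k _ => mul_self_nonneg _).1 h3 k (Finset.mem_univ k))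
  have h5 := Fintype.linearIndependent_iff.1 hb x (by rw [← hy, h4])
  exact hx0 (funext h5)

lemma GG_key {b : Fin m → M n} (hb : LinearIndependent ℚ b) (k : Fin m) :
    ∑ i, GG b k i • bt b i = b k := by
  have h1 : GG b * (GG b)⁻¹ = 1 := Matrix.mul_nonsing_inv _ (isUnit_iff_ne_zero.2 (GG_det hb))
  calc ∑ i, GG b k i • bt b i
      = ∑ i, ∑ j, (GG b k i * (GG b)⁻¹ i j) • b j := by
        refine Finset.sum_congr rfl fun i _ => ?_
        rw [bt, Finset.smul_sum]
        exact Finset.sum_congr rfl fun j _ => by rw [smul_smul]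
    _ = ∑ j, (∑ i, GG b k i * (GG b)⁻¹ i j) • b j := by
        rw [Finset.sum_comm]
        exact Finset.sum_congr rfl fun j _ => by rw [Finset.sum_smul]
    _ = ∑ j, ((GG b * (GG b)⁻¹) k j) • b j := by
        exact Finset.sum_congr rfl fun j _ => by rw [Matrix.mul_apply]
    _ = b k := by
        rw [h1]
        simp [Matrix.one_apply]

lemma bt_mem {b : Fin m → M n} (i : Fin m) : bt b i ∈ Submodule.span ℚ (Set.range b) :=
  Submodule.sum_mem _ fun j _ =>
    Submodule.smul_mem _ _ (Submodule.subset_span (Set.mem_range_self j))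

lemma star {b : Fin m → M n} (hb : LinearIndependent ℚ b) (c : Fin m → ℚ) :
    ∑ i, (∑ k, (∑ j, c j • b j) k * b i k) • bt b i = ∑ j, c j • b j := by
  have hcoef : ∀ i, (∑ k, (∑ j, c j • b j) k * b i k) = ∑ j, c j * GG b j i := by
    intro i
    calc ∑ k, (∑ j, c j • b j) k * b i k
        = ∑ k, ∑ j, c j * (b j k * b i k) := by
          refine Finset.sum_congr rfl fun k _ => ?_
          rw [Finset.sum_apply, Finset.sum_mul]
          exact Finset.sum_congr rfl fun j _ => by simp [mul_assoc]
      _ = ∑ j, ∑ k, c j * (b j k * b i k) := Finset.sum_comm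
      _ = ∑ j, c j * GG b j i := by
          refine Finset.sum_congr rfl fun j _ => ?_
          rw [← Finset.mul_sum]
          rfl
  calc ∑ i, (∑ k, (∑ j, c j • b j) k * b i k) • bt b i
      = ∑ i, ∑ j, (c j * GG b j i) • bt b i := by
        refine Finset.sum_congr rfl fun i _ => ?_
        rw [hcoef i, Finset.sum_smul]
    _ = ∑ j, c j • ∑ i, GG b j i • bt b i := by
        rw [Finset.sum_comm]
        refine Finset.sum_congr rfl fun j _ => ?_
        rw [Finset.smul_sum]
        exact Finset.sum_congr rfl fun i _ => by rw [smul_smul]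
    _ = ∑ j, c j • b j := Finset.sum_congr rfl fun j _ => by rw [GG_key hb j]

end Gram

section Build

variable {n m : ℕ} (r : M n → M n → Prop) (b : Fin m → M n)

/-- first vector -/
noncomputable def uu : Fin n → ℝ := fun k => ∑ i, ff r b (bt b i) * ((b i k : ℚ) : ℝ)

variable {r b} (h : Good r) (hb : LinearIndependent ℚ b) (hm : m ≠ 0)
include h hb hm

lemma dot_eq {v : M n} (hv : v ∈ Submodule.span ℚ (Set.range b)) :
    ∑ k, (v k : ℝ) * uu r b k = ff r b v := by
  obtain ⟨c, rfl⟩ := (Submodule.mem_span_range_iff_exists_fun ℚ).1 hv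
  have lhs : ∑ k, ((((∑ j, c j • b j) k : ℚ)) : ℝ) * uu r b k
      = ∑ i, (((∑ k, (∑ j, c j • b j) k * b i k : ℚ)) : ℝ) * ff r b (bt b i) := by
    calc ∑ k, ((((∑ j, c j • b j) k : ℚ)) : ℝ) * uu r b k
        = ∑ k, ∑ i, (((((∑ j, c j • b j) k * b i k : ℚ))) : ℝ) * ff r b (bt b i) := by
          refine Finset.sum_congr rfl fun k _ => ?_
          rw [uu, Finset.mul_sum]
          refine Finset.sum_congr rfl fun i _ => ?_
          push_cast
          ring
      _ = ∑ i, ∑ k, (((((∑ j, c j • b j) k * b i k : ℚ))) : ℝ) * ff r b (bt b i) :=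
          Finset.sum_comm
      _ = ∑ i, (((∑ k, (∑ j, c j • b j) k * b i k : ℚ)) : ℝ) * ff r b (bt b i) := by
          refine Finset.sum_congr rfl fun i _ => ?_
          rw [← Finset.sum_mul]
          push_cast
          ring
  rw [lhs]
  conv_rhs => rw [← star hb c]
  rw [h.ff_sum hb hm Finset.univ _ _ (fun i _ => bt_mem i)]

lemma uu_mem : uu r b ∈ Submodule.span ℝ (Set.range fun j => coeR (b j)) := by
  have huu : uu r b = ∑ i, ff r b (bt b i) • coeR (b i) := by
    funext k
    rw [uu, Finset.sum_apply]
    rfl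
  rw [huu]
  exact Submodule.sum_mem _ fun i _ =>
    Submodule.smul_mem _ _ (Submodule.subset_span (Set.mem_range_self i))

lemma uu_ne : uu r b ≠ 0 := by
  intro h0
  have h1 := h.dot_eq hb hm (ee_mem h)
  rw [h0, h.ff_ee hb hm] at h1
  simp at h1

lemma span_uu : Submodule.span ℚ (Set.range (uu r b))
    = Submodule.span ℚ (Set.range fun i => ff r b (bt b i)) := by
  apply le_antisymm
  · rw [Submodule.span_le]
    rintro _ ⟨k, rfl⟩
    have : uu r b k = ∑ i, (b i k) • ff r b (bt b i) := by
      rw [uu]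
      refine Finset.sum_congr rfl fun i _ => ?_
      rw [Rat.smul_def]
      ring
    rw [this]
    exact Submodule.sum_mem _ fun i _ =>
      Submodule.smul_mem _ _ (Submodule.subset_span (Set.mem_range_self i))
  · rw [Submodule.span_le]
    rintro _ ⟨i, rfl⟩
    show ff r b (bt b i) ∈ _
    have h1 := h.dot_eq hb hm (bt_mem i : bt b i ∈ _)
    rw [← h1]
    have : ∑ k, ((bt b i k : ℚ) : ℝ) * uu r b k = ∑ k, (bt b i k) • uu r b k := by
      refine Finset.sum_congr rfl fun k _ => ?_
      rw [Rat.smul_def]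
    rw [this]
    exact Submodule.sum_mem _ fun k _ =>
      Submodule.smul_mem _ _ (Submodule.subset_span (Set.mem_range_self k))

/-- the functional as a linear map on the span -/
noncomputable def phi : (Submodule.span ℚ (Set.range b)) →ₗ[ℚ] ℝ where
  toFun v := ff r b v.1
  map_add' x y := h.ff_add hb hm x.2 y.2
  map_smul' q x := by simpa [Rat.smul_def] using h.ff_smul hb hm q x.2

lemma range_phi : LinearMap.range (phi h hb hm)
    = Submodule.span ℚ (Set.range fun i => ff r b (bt b i)) := by
  apply le_antisymm
  · rintro _ ⟨⟨v, hv⟩, rfl⟩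
    obtain ⟨c, rfl⟩ := (Submodule.mem_span_range_iff_exists_fun ℚ).1 hv
    have : phi h hb hm ⟨∑ j, c j • b j, hv⟩ = ff r b (∑ j, c j • b j) := rfl
    rw [this]
    have hst := star hb c
    rw [← hst, h.ff_sum hb hm Finset.univ _ _ (fun i _ => bt_mem i)]
    refine Submodule.sum_mem _ fun i _ => ?_
    have : ((∑ k, (∑ j, c j • b j) k * b i k : ℚ) : ℝ) * ff r b (bt b i)
        = (∑ k, (∑ j, c j • b j) k * b i k : ℚ) • ff r b (bt b i) := by
      rw [Rat.smul_def]
    rw [this]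
    exact Submodule.smul_mem _ _ (Submodule.subset_span (Set.mem_range_self i))
  · rw [Submodule.span_le]
    rintro _ ⟨i, rfl⟩
    exact ⟨⟨bt b i, bt_mem i⟩, rfl⟩

end Build

lemma sub_basis {n : ℕ} (S : Submodule ℚ (M n)) :
    ∃ c : Fin (Module.finrank ℚ S) → M n,
      LinearIndependent ℚ c ∧ Submodule.span ℚ (Set.range c) = S := by
  let bS := Module.finBasis ℚ S
  refine ⟨fun i => (bS i : M n), ?_, ?_⟩
  · exact bS.linearIndependent.map' S.subtype (LinearMap.ker_eq_bot.2 Subtype.val_injective)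
  · have : Set.range (fun i => (bS i : M n)) = S.subtype '' Set.range bS := by
      rw [← Set.range_comp]
      rfl
    rw [this, ← Submodule.map_span, bS.span_eq, Submodule.map_subtype_top]

set_option maxHeartbeats 2000000 in
theorem main_rec {n : ℕ} {r : M n → M n → Prop} (h : Good r) :
    ∀ m : ℕ, ∀ b : Fin m → M n, LinearIndependent ℚ b →
    ∃ (s : ℕ) (u : Fin s → (Fin n → ℝ)),
      (∀ i, u i ≠ 0) ∧
      (∀ i, u i ∈ Submodule.span ℝ (Set.range fun j => coeR (b j))) ∧
      (∀ i j, i ≠ j → ∑ k, u i k * u j k = 0) ∧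
      ((∑ i, Module.finrank ℚ (Submodule.span ℚ (Set.range (u i)))) = m) ∧
      (∀ v ∈ Submodule.span ℚ (Set.range b), v ≠ 0 → r 0 v →
        toLex (0 : Fin s → ℝ) < toLex (fun i => ∑ k, (v k : ℝ) * u i k)) := by
  intro m
  induction m using Nat.strong_induction_on with
  | _ m IH =>
    intro b hb
    rcases Nat.eq_zero_or_pos m with rfl | hmpos
    · refine ⟨0, Fin.elim0, fun i => i.elim0, fun i => i.elim0, fun i => i.elim0, by simp, ?_⟩
      intro v hv hv0 _
      exfalso
      apply hv0
      have : Set.range b = ∅ := Set.range_eq_empty b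
      rw [this, Submodule.span_empty, Submodule.mem_bot] at hv
      exact hv
    have hm : m ≠ 0 := Nat.pos_iff_ne_zero.1 hmpos
    set W := Submodule.span ℚ (Set.range b) with hW
    obtain ⟨b', hb', hspan'⟩ :=
      sub_basis (Submodule.map W.subtype (LinearMap.ker (phi h hb hm)))
    have hb'W : ∀ i, b' i ∈ W := by
      intro i
      have : b' i ∈ Submodule.map W.subtype (LinearMap.ker (phi h hb hm)) := by
        rw [← hspan']
        exact Submodule.subset_span (Set.mem_range_self i)
      obtain ⟨x, _, hxe⟩ := this
      rw [← hxe]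
      exact x.2
    have hb'f : ∀ i, ff r b (b' i) = 0 := by
      intro i
      have hmem : b' i ∈ Submodule.map W.subtype (LinearMap.ker (phi h hb hm)) := by
        rw [← hspan']
        exact Submodule.subset_span (Set.mem_range_self i)
      obtain ⟨x, hx, hxe⟩ := hmem
      rw [← hxe]
      exact LinearMap.mem_ker.1 hx
    have hdimW : Module.finrank ℚ W = m := by
      rw [hW, finrank_span_eq_card hb, Fintype.card_fin]
    have hrn := LinearMap.finrank_range_add_finrank_ker (phi h hb hm)
    rw [hdimW] at hrn
    have hmker : Module.finrank ℚ (Submodule.map W.subtype (LinearMap.ker (phi h hb hm)))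
        = Module.finrank ℚ (LinearMap.ker (phi h hb hm)) :=
      Submodule.finrank_map_subtype_eq _ _
    have hrange1 : Module.finrank ℚ (LinearMap.range (phi h hb hm)) ≠ 0 := by
      intro h0
      have hbot := Submodule.finrank_eq_zero.1 h0
      have : (1 : ℝ) ∈ LinearMap.range (phi h hb hm) := ⟨⟨ee r b, ee_mem h⟩, h.ff_ee hb hm⟩
      rw [hbot] at this
      simpa using this
    have hlt : Module.finrank ℚ (Submodule.map W.subtype (LinearMap.ker (phi h hb hm))) < m := by
      omega
    obtain ⟨s', u', hne', hmem', horth', hsum', hpos'⟩ := IH _ hlt b' hb'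
    -- the span of b's real images
    have hmono : Submodule.span ℝ (Set.range fun j => coeR (b' j))
        ≤ Submodule.span ℝ (Set.range fun j => coeR (b j)) := by
      rw [Submodule.span_le]
      rintro _ ⟨i, rfl⟩
      exact coeR_mem_span b (hb'W i)
    have horthu : ∀ j, ∑ k, u' j k * uu r b k = 0 := by
      intro j
      apply orth_span (uu r b) (Set.range fun j => coeR (b' j))
      · rintro _ ⟨i, rfl⟩
        have := h.dot_eq hb hm (hb'W i)
        rw [hb'f i] at this
        exact this
      · exact hmem' j
    refine ⟨s' + 1, Fin.cons (α := fun _ => Fin n → ℝ) (uu r b) u', ?_, ?_, ?_, ?_, ?_⟩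
    · intro i
      cases i using Fin.cases with
      | zero => simpa using h.uu_ne hb hm
      | succ j => simpa using hne' j
    · intro i
      cases i using Fin.cases with
      | zero => simpa using h.uu_mem hb hm
      | succ j =>
          rw [Fin.cons_succ]
          exact hmono (hmem' j)
    · intro i j hij
      cases i using Fin.cases with
      | zero =>
          cases j using Fin.cases with
          | zero => exact absurd rfl hij
          | succ jj =>
              simp only [Fin.cons_zero, Fin.cons_succ]
              rw [Finset.sum_congr rfl fun k _ => mul_comm (uu r b k) (u' jj k)]
              exact horthu jj
      | succ ii =>
          cases j using Fin.cases with
          | zero =>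
              simp only [Fin.cons_zero, Fin.cons_succ]
              exact horthu ii
          | succ jj =>
              simp only [Fin.cons_succ]
              exact horth' ii jj (fun hiijj => hij (by rw [hiijj]))
    · rw [Fin.sum_univ_succ]
      rw [show (Fin.cons (α := fun _ => Fin n → ℝ) (uu r b) u' 0) = uu r b from rfl]
      rw [Finset.sum_congr rfl fun (i : Fin s') _ => by
        rw [show (Fin.cons (α := fun _ => Fin n → ℝ) (uu r b) u' i.succ) = u' i from rfl]]
      have hd : Module.finrank ℚ (Submodule.span ℚ (Set.range (uu r b)))
          = Module.finrank ℚ (LinearMap.range (phi h hb hm)) := by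
        rw [h.span_uu hb hm, ← h.range_phi hb hm]
      rw [hd, hsum']
      omega
    · intro v hv hv0 hpos
      have hf0 : 0 ≤ ff r b v := h.ff_nonneg hb hm hv hpos
      rcases eq_or_lt_of_le hf0 with heq | hltf
      · -- tail case
        have hvK : v ∈ Submodule.span ℚ (Set.range b') := by
          rw [hspan']
          exact ⟨⟨v, hv⟩, heq.symm, rfl⟩
        have htail := hpos' v hvK hv0 hpos
        apply lex_lt_tail
        · simp only [Pi.zero_apply, Fin.cons_zero]
          rw [h.dot_eq hb hm hv, ← heq]
        · have h1 : ((0 : Fin (s'+1) → ℝ) ∘ Fin.succ) = (0 : Fin s' → ℝ) := rfl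
          have h2 : ((fun i => ∑ k, (v k : ℝ) * Fin.cons (α := fun _ => Fin n → ℝ) (uu r b) u' i k) ∘ Fin.succ)
              = fun i => ∑ k, (v k : ℝ) * u' i k := by
            funext i
            simp [Fin.cons_succ]
          rw [h1, h2]
          exact htail
      · apply lex_lt_head
        simp only [Pi.zero_apply, Fin.cons_zero]
        rw [h.dot_eq hb hm hv]
        exact hltf

end Good

end Robbiano

/-- Robbiano's theorem: for any additive total order `⪯` on `ℚⁿ` (`n ≥ 1`) there exist
`s ≥ 1` and non-zero pairwise orthogonal vectors `u₁, …, u_s ∈ ℝⁿ` with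
`d(u₁) + … + d(u_s) = n` (where `d(w)` is the dimension of the `ℚ`-vector space spanned by
the components of `w`) such that `ι(v) = (v·u₁, …, v·u_s)` is an injective order
homomorphism from `(ℚⁿ, ⪯)` to `ℝˢ` with the lexicographic order. -/
theorem stmt3 {n : ℕ} (hn : 0 < n)
    (r : (Fin n → ℚ) → (Fin n → ℚ) → Prop)
    (hrefl : ∀ a, r a a)
    (htrans : ∀ a b c, r a b → r b c → r a c)
    (hantisymm : ∀ a b, r a b → r b a → a = b)
    (htotal : ∀ a b, r a b ∨ r b a)
    (hadd : ∀ a b c, r a b → r (a + c) (b + c)) :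
    ∃ (s : ℕ) (u : Fin s → (Fin n → ℝ)),
      1 ≤ s ∧
      (∀ i, u i ≠ 0) ∧
      (∀ i j, i ≠ j → ∑ k, u i k * u j k = 0) ∧
      (∑ i, Module.finrank ℚ (Submodule.span ℚ (Set.range (u i)))) = n ∧
      Function.Injective
        (fun v : Fin n → ℚ => toLex (fun i : Fin s => ∑ k, (v k : ℝ) * u i k)) ∧
      (∀ v w : Fin n → ℚ, r v w →
        toLex (fun i : Fin s => ∑ k, (v k : ℝ) * u i k) ≤
          toLex (fun i : Fin s => ∑ k, (w k : ℝ) * u i k)) := by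
  have h : Robbiano.Good r := ⟨hrefl, htrans, hantisymm, htotal, hadd⟩
  have hbindep : LinearIndependent ℚ (⇑(Pi.basisFun ℚ (Fin n))) :=
    (Pi.basisFun ℚ (Fin n)).linearIndependent
  obtain ⟨s, u, hne, hmem, horth, hsum, hposl⟩ :=
    h.main_rec n (⇑(Pi.basisFun ℚ (Fin n))) hbindep
  have htop : Submodule.span ℚ (Set.range ⇑(Pi.basisFun ℚ (Fin n))) = ⊤ :=
    (Pi.basisFun ℚ (Fin n)).span_eq
  have hkey : ∀ a c : Fin n → ℚ, r a c → a ≠ c →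
      toLex (fun i : Fin s => ∑ k, (a k : ℝ) * u i k) <
        toLex (fun i : Fin s => ∑ k, (c k : ℝ) * u i k) := by
    intro a c hac hne'
    have hp0 : c - a ≠ 0 := sub_ne_zero.2 (Ne.symm hne')
    have hppos : r 0 (c - a) := h.sub_nonneg hac
    have hlex := hposl (c - a) (htop ▸ Submodule.mem_top) hp0 hppos
    have hfun : (fun i : Fin s => ∑ k, ((c k : ℝ)) * u i k)
        = (fun i : Fin s => ∑ k, (a k : ℝ) * u i k)
          + (fun i : Fin s => ∑ k, ((c - a) k : ℝ) * u i k) := by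
      funext i
      rw [Pi.add_apply, ← Finset.sum_add_distrib]
      refine Finset.sum_congr rfl fun k _ => ?_
      have : ((c - a) k : ℝ) = (c k : ℝ) - (a k : ℝ) := by
        push_cast [Pi.sub_apply]
        ring
      rw [this]
      ring
    calc toLex (fun i : Fin s => ∑ k, (a k : ℝ) * u i k)
        < toLex (fun i : Fin s => ∑ k, (a k : ℝ) * u i k)
            + toLex (fun i : Fin s => ∑ k, ((c - a) k : ℝ) * u i k) :=
          lt_add_of_pos_right _ hlex
      _ = toLex (fun i : Fin s => ∑ k, (c k : ℝ) * u i k) := by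
          rw [hfun]
          rfl
  refine ⟨s, u, ?_, hne, horth, hsum, ?_, ?_⟩
  · rcases Nat.eq_zero_or_pos s with rfl | h1
    · simp at hsum
      omega
    · exact h1
  · intro v w hvw
    by_contra hne'
    rcases htotal v w with h1 | h1
    · exact absurd hvw (ne_of_lt (hkey v w h1 hne'))
    · exact absurd hvw.symm (ne_of_lt (hkey w v h1 (Ne.symm hne')))
  · intro v w hvw
    rcases eq_or_ne v w with rfl | hne'
    · exact le_refl _
    · exact (hkey v w hvw hne').le
end

section
/- Let K be a field of characteristic 0 with algebraic closure K̄, and let I ⊆ K[x₁, …, xₙ] be an ideal such that the quotient K[x₁, …, xₙ]/I is a non-zero finite-dimensional K-vector space (I is zero-dimensional), I is radical, and I is in normal xₙ-position, meaning that any two distinct common zeros (a₁, …, aₙ) and (b₁, …, bₙ) of I in K̄ⁿ satisfy aₙ ≠ bₙ. Then there exist univariate polynomials g₁, …, g_{n−1} ∈ K[xₙ] and a squarefree polynomial gₙ ∈ K[xₙ] such that I is generated by {x₁ − g₁(xₙ), …, x_{n−1} − g_{n−1}(xₙ), gₙ(xₙ)}, and the set of common zeros of I in K̄ⁿ equals {(g₁(a),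 …, g_{n−1}(a), a) : a ∈ K̄, gₙ(a) = 0}. -/
set_option maxHeartbeats 1000000
set_option synthInstance.maxHeartbeats 400000

open MvPolynomial

theorem aux_finrank_le_card_algHom {K : Type*} [Field K] [CharZero K]
    {A : Type*} [CommRing A] [Algebra K A] [FiniteDimensional K A] [Nontrivial A] [IsReduced A]
    (L : Type*) [Field L] [Algebra K L] [IsAlgClosed L] :
    Module.finrank K A ≤ Nat.card (A →ₐ[K] L) := by
  classical
  have hart : IsArtinianRing A := isArtinian_of_tower K inferInstance
  haveI := (IsArtinianRing.setOfPred_isMaximal_finite A).to_subtype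
  set Idx := {m : Ideal A | m.IsMaximal} with hIdx
  haveI hfd : ∀ m : Idx, FiniteDimensional K (A ⧸ m.1) := fun m =>
    Module.Finite.of_surjective (Ideal.Quotient.mkₐ K m.1).toLinearMap
      Ideal.Quotient.mk_surjective
  -- the algebra iso A ≃ₐ Π m, A ⧸ m
  have hco : Pairwise fun m m' : Idx => IsCoprime m.1 m'.1 := fun m m' hne =>
    Ideal.isCoprime_iff_sup_eq.mpr (Ideal.IsMaximal.coprime_of_ne m.2 m'.2 (fun h => hne (Subtype.ext h)))
  let Φ : A →ₐ[K] ∀ m : Idx, A ⧸ m.1 := Pi.algHom K _ (fun m => Ideal.Quotient.mkₐ K m.1)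
  have hinj : Function.Injective Φ := by
    rw [injective_iff_map_eq_zero]
    intro x hx
    have hx' : ∀ m : Idx, x ∈ m.1 := by
      intro m
      have := congrFun hx m
      simpa [Φ, Ideal.Quotient.eq_zero_iff_mem] using this
    have : IsNilpotent x := by
      rw [nilpotent_iff_mem_prime]
      intro p hp
      exact hx' ⟨p, (IsArtinianRing.isPrime_iff_isMaximal p).mp hp⟩
    exact IsReduced.eq_zero x this
  have hsurj : Function.Surjective Φ := by
    intro x
    obtain ⟨r, hr⟩ := Ideal.pi_quotient_surjective hco x
    exact ⟨r, funext fun m => hr m⟩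
  let e : A ≃ₐ[K] ∀ m : Idx, A ⧸ m.1 := AlgEquiv.ofBijective Φ ⟨hinj, hsurj⟩
  cases nonempty_fintype Idx
  have hrank : Module.finrank K A = ∑ m : Idx, Module.finrank K (A ⧸ m.1) := by
    rw [e.toLinearEquiv.finrank_eq, Module.finrank_pi_fintype]
  -- each quotient field has exactly finrank many homs to L
  have hcard : ∀ m : Idx, Nat.card ((A ⧸ m.1) →ₐ[K] L) = Module.finrank K (A ⧸ m.1) := by
    intro m
    haveI : m.1.IsMaximal := m.2
    letI : Field (A ⧸ m.1) := Ideal.Quotient.field m.1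
    haveI : PerfectField K := PerfectField.ofCharZero
    haveI : Algebra.IsAlgebraic K (A ⧸ m.1) := Algebra.IsAlgebraic.of_finite K _
    haveI hsep : Algebra.IsSeparable K (A ⧸ m.1) := Algebra.IsAlgebraic.isSeparable_of_perfectField
    rw [Nat.card_eq_fintype_card]
    exact @AlgHom.card K (A ⧸ m.1) _ _ _ _ hsep L _ _ _
  -- injection from the disjoint union of hom-sets into `A →ₐ[K] L`
  let Ψ : (Σ m : Idx, ((A ⧸ m.1) →ₐ[K] L)) → (A →ₐ[K] L) :=
    fun p => p.2.comp (Ideal.Quotient.mkₐ K p.1.1)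
  have hker : ∀ p : (Σ m : Idx, ((A ⧸ m.1) →ₐ[K] L)), RingHom.ker (Ψ p) = p.1.1 := by
    rintro ⟨m, φ⟩
    have hle : m.1 ≤ RingHom.ker (Ψ ⟨m, φ⟩) := by
      intro x hx
      have : (Ideal.Quotient.mkₐ K m.1 x) = 0 := by
        rwa [Ideal.Quotient.mkₐ_eq_mk, Ideal.Quotient.eq_zero_iff_mem]
      simp only [RingHom.mem_ker, Ψ, AlgHom.comp_apply, this, map_zero]
    have hne : RingHom.ker (Ψ ⟨m, φ⟩) ≠ ⊤ := by
      intro h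
      have h1 : (1 : A) ∈ RingHom.ker (Ψ ⟨m, φ⟩) := h ▸ Submodule.mem_top
      rw [RingHom.mem_ker, map_one] at h1
      exact one_ne_zero h1
    exact (m.2.eq_of_le hne hle).symm
  have hΨinj : Function.Injective Ψ := by
    rintro ⟨m, φ⟩ ⟨m', ψ⟩ h
    have hm : m = m' := by
      have := hker ⟨m, φ⟩
      rw [h, hker ⟨m', ψ⟩] at this
      exact Subtype.ext this.symm
    subst hm
    have : φ = ψ := Ideal.Quotient.algHom_ext K h
    rw [this]
  calc Module.finrank K A = ∑ m : Idx, Module.finrank K (A ⧸ m.1) := hrank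
    _ = ∑ m : Idx, Nat.card ((A ⧸ m.1) →ₐ[K] L) := by
        exact Finset.sum_congr rfl (fun m _ => (hcard m).symm)
    _ = Nat.card (Σ m : Idx, ((A ⧸ m.1) →ₐ[K] L)) := by
        letI : ∀ m : Idx, Fintype ((A ⧸ m.1) →ₐ[K] L) := fun m => Fintype.ofFinite _
        simp only [Nat.card_eq_fintype_card, Fintype.card_sigma]
    _ ≤ Nat.card (A →ₐ[K] L) := Nat.card_le_card_of_injective Ψ hΨinj


theorem aux_sub_aeval_mem {K : Type*} [CommRing K] {σ : Type*}
    (f : σ → MvPolynomial σ K) (J : Ideal (MvPolynomial σ K))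
    (h : ∀ i, X i - f i ∈ J) (p : MvPolynomial σ K) :
    p - aeval f p ∈ J := by
  induction p using MvPolynomial.induction_on with
  | C a => simp only [aeval_C, algebraMap_eq, sub_self]; exact J.zero_mem
  | add p q hp hq =>
      have heq : (p + q) - aeval f (p + q) = (p - aeval f p) + (q - aeval f q) := by
        rw [map_add]; ring
      rw [heq]; exact J.add_mem hp hq
  | mul_X p i hp =>
      have heq : p * X i - aeval f (p * X i)
          = p * (X i - f i) + (p - aeval f p) * f i := by
        rw [map_mul, aeval_X]; ring
      rw [heq]
      exact J.add_mem (J.mul_mem_left _ (h i)) (J.mul_mem_right _ hp)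

open MvPolynomial

/-- The Shape Lemma: let `K` be a field of characteristic `0`, and let
`I ⊆ K[x₀, …, xₙ]` be a zero-dimensional radical ideal (the quotient is a non-zero
finite-dimensional `K`-vector space) in normal position with respect to the last
variable (distinct common zeros in the algebraic closure differ in the last
coordinate). Then there are univariate polynomials `g₀, …, g_{n-1} ∈ K[xₙ]` and a
squarefree `gₙ ∈ K[xₙ]` such that `I` is generated by
`{x₀ − g₀(xₙ), …, x_{n−1} − g_{n−1}(xₙ), gₙ(xₙ)}`, and the set of common zeros of `I`
in the algebraic closure is `{(g₀(a), …, g_{n−1}(a), a) : gₙ(a) = 0}`. -/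
theorem stmt6 {K : Type*} [Field K] [CharZero K] {n : ℕ}
    (I : Ideal (MvPolynomial (Fin (n + 1)) K))
    (hfin : FiniteDimensional K (MvPolynomial (Fin (n + 1)) K ⧸ I))
    (hnontriv : Nontrivial (MvPolynomial (Fin (n + 1)) K ⧸ I))
    (hrad : I.IsRadical)
    (hpos : ∀ a b : Fin (n + 1) → AlgebraicClosure K,
      (∀ p ∈ I, aeval a p = 0) → (∀ p ∈ I, aeval b p = 0) → a ≠ b →
        a (Fin.last n) ≠ b (Fin.last n)) :
    ∃ g : Fin (n + 1) → Polynomial K,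
      Squarefree (g (Fin.last n)) ∧
      I = Ideal.span
        ((Set.range fun i : Fin n =>
            X i.castSucc - Polynomial.aeval (X (Fin.last n)) (g i.castSucc)) ∪
          {Polynomial.aeval (X (Fin.last n)) (g (Fin.last n))}) ∧
      {a : Fin (n + 1) → AlgebraicClosure K | ∀ p ∈ I, aeval a p = 0} =
        {a : Fin (n + 1) → AlgebraicClosure K |
          Polynomial.aeval (a (Fin.last n)) (g (Fin.last n)) = 0 ∧
          ∀ i : Fin n, a i.castSucc = Polynomial.aeval (a (Fin.last n)) (g i.castSucc)} := by
  classical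
  haveI := hfin
  haveI := hnontriv
  set L := AlgebraicClosure K with hL
  let π : MvPolynomial (Fin (n + 1)) K →ₐ[K] (MvPolynomial (Fin (n + 1)) K ⧸ I) :=
    Ideal.Quotient.mkₐ K I
  haveI hred : IsReduced (MvPolynomial (Fin (n + 1)) K ⧸ I) :=
    (Ideal.isRadical_iff_quotient_reduced I).mp hrad
  set t : MvPolynomial (Fin (n + 1)) K ⧸ I := π (X (Fin.last n)) with ht
  have hint : IsIntegral K t := IsIntegral.of_finite K t
  set μ := minpoly K t with hμ
  have hμ0 : μ ≠ 0 := minpoly.ne_zero hint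
  have hπ0 : ∀ p ∈ I, π p = 0 := by
    intro p hp
    simpa [π, Ideal.Quotient.mkₐ_eq_mk, Ideal.Quotient.eq_zero_iff_mem] using hp
  -- homs give zeros
  have hzero : ∀ φ : (MvPolynomial (Fin (n + 1)) K ⧸ I) →ₐ[K] L,
      (∀ p ∈ I, aeval (fun i => φ (π (X i))) p = 0) := by
    intro φ p hp
    have h1 : (φ.comp π) = aeval ((φ.comp π) ∘ X) := aeval_unique _
    have h2 : aeval (fun i => φ (π (X i))) p = φ (π p) := by
      conv_rhs => rw [show φ (π p) = (φ.comp π) p from rfl, h1]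
      rfl
    rw [h2, hπ0 p hp, map_zero]
  -- injectivity of evaluation at t
  have hinj : Function.Injective
      (fun φ : (MvPolynomial (Fin (n + 1)) K ⧸ I) →ₐ[K] L => φ t) := by
    intro φ ψ h
    by_contra hne
    have hab : (fun i => φ (π (X i))) ≠ (fun i => ψ (π (X i))) := by
      intro he
      apply hne
      have hc : φ.comp π = ψ.comp π := by
        rw [aeval_unique (φ.comp π), aeval_unique (ψ.comp π)]
        exact congrArg _ (funext fun i => congrFun he i)
      exact Ideal.Quotient.algHom_ext K hc
    exact hpos _ _ (hzero φ) (hzero ψ) hab (by simpa using h)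
  -- counting chain
  have h1 : Module.finrank K (MvPolynomial (Fin (n + 1)) K ⧸ I)
      ≤ Nat.card ((MvPolynomial (Fin (n + 1)) K ⧸ I) →ₐ[K] L) :=
    aux_finrank_le_card_algHom L
  set S : Finset L := (μ.aroots L).toFinset with hS
  have hmem : ∀ φ : (MvPolynomial (Fin (n + 1)) K ⧸ I) →ₐ[K] L, φ t ∈ S := by
    intro φ
    rw [hS, Multiset.mem_toFinset, Polynomial.mem_aroots]
    exact ⟨hμ0, by rw [Polynomial.aeval_algHom_apply, minpoly.aeval, map_zero]⟩
  have h2 : Nat.card ((MvPolynomial (Fin (n + 1)) K ⧸ I) →ₐ[K] L) ≤ S.card := by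
    have hi : Function.Injective
        (fun φ : (MvPolynomial (Fin (n + 1)) K ⧸ I) →ₐ[K] L => (⟨φ t, hmem φ⟩ : S)) :=
      fun φ ψ h => hinj (congrArg Subtype.val h)
    calc Nat.card ((MvPolynomial (Fin (n + 1)) K ⧸ I) →ₐ[K] L)
        ≤ Nat.card S := Nat.card_le_card_of_injective _ hi
      _ = S.card := Nat.card_eq_finsetCard S
  have h3 : S.card ≤ μ.natDegree := by
    refine le_trans (Multiset.toFinset_card_le _) ?_
    refine le_trans (Polynomial.card_roots' _) ?_
    exact Polynomial.natDegree_map_le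
  have h4 : Module.finrank K (Algebra.adjoin K ({t} : Set (MvPolynomial (Fin (n + 1)) K ⧸ I)))
      = μ.natDegree := by
    rw [(Algebra.adjoin.powerBasis hint).finrank, Algebra.adjoin.powerBasis_dim]
  have h5 : Module.finrank K (Algebra.adjoin K ({t} : Set (MvPolynomial (Fin (n + 1)) K ⧸ I)))
      ≤ Module.finrank K (MvPolynomial (Fin (n + 1)) K ⧸ I) :=
    Submodule.finrank_le (Subalgebra.toSubmodule (Algebra.adjoin K {t}))
  have htop : Algebra.adjoin K ({t} : Set (MvPolynomial (Fin (n + 1)) K ⧸ I)) = ⊤ := by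
    have heq : Module.finrank K (Algebra.adjoin K ({t} : Set (MvPolynomial (Fin (n + 1)) K ⧸ I)))
        = Module.finrank K (MvPolynomial (Fin (n + 1)) K ⧸ I) := le_antisymm h5 (by omega)
    have := Submodule.eq_top_of_finrank_eq
      (S := Subalgebra.toSubmodule (Algebra.adjoin K ({t} : Set (MvPolynomial (Fin (n + 1)) K ⧸ I)))) heq
    rwa [Algebra.toSubmodule_eq_top] at this
  have hsurjT : Function.Surjective
      (Polynomial.aeval t : Polynomial K →ₐ[K] (MvPolynomial (Fin (n + 1)) K ⧸ I)) := by
    intro z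
    have hz : z ∈ (Polynomial.aeval t :
        Polynomial K →ₐ[K] (MvPolynomial (Fin (n + 1)) K ⧸ I)).range := by
      rw [← Algebra.adjoin_singleton_eq_range_aeval, htop]
      trivial
    exact hz
  choose G hG using fun i : Fin n => hsurjT (π (X i.castSucc))
  let g : Fin (n + 1) → Polynomial K := Fin.lastCases μ G
  have hglast : g (Fin.last n) = μ := Fin.lastCases_last
  have hgcs : ∀ i : Fin n, g i.castSucc = G i := fun i => Fin.lastCases_castSucc i
  -- membership of the generators in I
  have hπgen : ∀ i : Fin n,
      (X i.castSucc - Polynomial.aeval (X (Fin.last n)) (g i.castSucc) :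
        MvPolynomial (Fin (n + 1)) K) ∈ I := by
    intro i
    rw [← Ideal.Quotient.eq_zero_iff_mem]
    have : π (X i.castSucc - Polynomial.aeval (X (Fin.last n)) (g i.castSucc)) = 0 := by
      rw [map_sub, ← Polynomial.aeval_algHom_apply, hgcs, hG i, sub_self]
    simpa [π, Ideal.Quotient.mkₐ_eq_mk] using this
  have hπμ : (Polynomial.aeval (X (Fin.last n)) (g (Fin.last n)) :
      MvPolynomial (Fin (n + 1)) K) ∈ I := by
    rw [← Ideal.Quotient.eq_zero_iff_mem]
    have : π (Polynomial.aeval (X (Fin.last n)) (g (Fin.last n))) = 0 := by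
      rw [← Polynomial.aeval_algHom_apply, hglast]
      exact minpoly.aeval K t
    simpa [π, Ideal.Quotient.mkₐ_eq_mk] using this
  set Sg : Set (MvPolynomial (Fin (n + 1)) K) :=
    (Set.range fun i : Fin n =>
        X i.castSucc - Polynomial.aeval (X (Fin.last n)) (g i.castSucc)) ∪
      {Polynomial.aeval (X (Fin.last n)) (g (Fin.last n))} with hSg
  have hle : Ideal.span Sg ≤ I := by
    rw [Ideal.span_le]
    rintro x (⟨i, rfl⟩ | rfl)
    · exact hπgen i
    · exact hπμ
  have hIspan : I = Ideal.span Sg := by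
    refine le_antisymm ?_ hle
    intro p hp
    let f : Fin (n + 1) → MvPolynomial (Fin (n + 1)) K :=
      Fin.lastCases (X (Fin.last n))
        (fun j => Polynomial.aeval (X (Fin.last n)) (g j.castSucc))
    have hXf : ∀ i, (X i - f i : MvPolynomial (Fin (n + 1)) K) ∈ Ideal.span Sg := by
      intro i
      induction i using Fin.lastCases with
      | last =>
          have : f (Fin.last n) = X (Fin.last n) := Fin.lastCases_last
          rw [this, sub_self]
          exact Ideal.zero_mem _
      | cast j =>
          have : f j.castSucc = Polynomial.aeval (X (Fin.last n)) (g j.castSucc) :=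
            Fin.lastCases_castSucc j
          rw [this]
          exact Ideal.subset_span (Or.inl ⟨j, rfl⟩)
    have hpq : p - aeval f p ∈ Ideal.span Sg := aux_sub_aeval_mem f _ hXf p
    let u : Fin (n + 1) → Polynomial K := Fin.lastCases Polynomial.X (fun j => g j.castSucc)
    have hcomp : (aeval f : MvPolynomial (Fin (n + 1)) K →ₐ[K] MvPolynomial (Fin (n + 1)) K)
        = (Polynomial.aeval (X (Fin.last n)) :
            Polynomial K →ₐ[K] MvPolynomial (Fin (n + 1)) K).comp (aeval u) := by
      apply MvPolynomial.algHom_ext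
      intro i
      induction i using Fin.lastCases with
      | last => simp [f, u, aeval_X]
      | cast j => simp [f, u, aeval_X]
    set r : Polynomial K := aeval u p with hr
    have hqr : aeval f p = Polynomial.aeval (X (Fin.last n)) r := by
      rw [hcomp]; rfl
    have hqI : aeval f p ∈ I := by
      have h' := I.sub_mem hp (hle hpq)
      simpa using h'
    have hrt : Polynomial.aeval t r = 0 := by
      have h0 : π (aeval f p) = 0 := by
        simpa [π, Ideal.Quotient.mkₐ_eq_mk, Ideal.Quotient.eq_zero_iff_mem] using hqI
      rw [hqr, ← Polynomial.aeval_algHom_apply] at h0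
      exact h0
    obtain ⟨s, hs⟩ := minpoly.dvd K t hrt
    have hq_mem : aeval f p ∈ Ideal.span Sg := by
      rw [hqr, hs, map_mul]
      refine Ideal.mul_mem_right _ _ (Ideal.subset_span (Or.inr ?_))
      show _ ∈ ({Polynomial.aeval (X (Fin.last n)) (g (Fin.last n))} : Set _)
      rw [Set.mem_singleton_iff, hglast]
    have : p = (p - aeval f p) + aeval f p := by ring
    rw [this]
    exact Ideal.add_mem _ hpq hq_mem
  refine ⟨g, ?_, hIspan, ?_⟩
  · -- squarefree
    rw [hglast]
    refine (isRadical_iff_squarefree_of_ne_zero hμ0).mp ?_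
    intro k y hdvd
    have hy : (Polynomial.aeval t y) ^ k = 0 := by
      obtain ⟨c, hc⟩ := hdvd
      have h0 : Polynomial.aeval t (y ^ k) = 0 := by
        rw [hc, map_mul]
        have : Polynomial.aeval t μ = 0 := minpoly.aeval K t
        rw [this, zero_mul]
      simpa [map_pow] using h0
    have hy0 : Polynomial.aeval t y = 0 := IsReduced.eq_zero _ ⟨k, hy⟩
    exact minpoly.dvd K t hy0
  · -- zero sets
    have hev : ∀ (a : Fin (n + 1) → L) (q : Polynomial K),
        (aeval a : MvPolynomial (Fin (n + 1)) K →ₐ[K] L)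
            (Polynomial.aeval (X (Fin.last n)) q)
          = Polynomial.aeval (a (Fin.last n)) q := by
      intro a q
      rw [← Polynomial.aeval_algHom_apply, aeval_X]
    ext a
    simp only [Set.mem_setOf_eq]
    constructor
    · intro h
      refine ⟨?_, fun i => ?_⟩
      · have h3 := h _ hπμ
        rwa [hev] at h3
      · have h2 := h _ (hπgen i)
        rw [map_sub, hev, sub_eq_zero, aeval_X] at h2
        exact h2
    · rintro ⟨hc1, hc2⟩ p hp
      have hsub : I ≤ RingHom.ker (aeval a : MvPolynomial (Fin (n + 1)) K →ₐ[K] L) := by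
        rw [hIspan, Ideal.span_le]
        rintro x (⟨i, rfl⟩ | rfl)
        · simp only [SetLike.mem_coe, RingHom.mem_ker, map_sub, hev, aeval_X]
          rw [sub_eq_zero]
          exact hc2 i
        · simp only [SetLike.mem_coe, RingHom.mem_ker, hev]
          exact hc1
      exact hsub hp
end

section
/- Let F ∈ ℚ[x,y][[t]] be the unique solution of F = 1 + t(x+y)F + tΔₓF + tΔ_yF. Then, regarding all series as elements of ℚ(x,y)[[t]], one has xy(1 − tS)·F(x,y;t) = xy − t·x·F(x,0;t) − t·y·F(0,y;t), where S := x + y + 1/x + 1/y ∈ ℚ(x,y). -/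
open MvPolynomial

noncomputable section

/-- The ring `ℚ[x,y]`, with `x = X 0` and `y = X 1`. -/
abbrev R2 : Type := MvPolynomial (Fin 2) ℚ

/-- The field `ℚ(x,y)` of rational functions. -/
abbrev K2 : Type := FractionRing R2

/-- The embedding `ℚ[x,y] → ℚ(x,y)`. -/
def φ : R2 →+* K2 := algebraMap R2 K2

/-- The substitution homomorphism `ℚ[x,y] → ℚ(x,y)`, `x ↦ a`, `y ↦ b`. -/
def sub (a b : K2) : R2 →+* K2 := eval₂Hom (φ.comp (C : ℚ →+* R2)) ![a, b]

/-- The substitution `x ↦ 0` on `ℚ[x,y]`. -/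
def subX0 : R2 →+* R2 := (aeval ![0, X 1] : R2 →ₐ[ℚ] R2).toRingHom

/-- The substitution `y ↦ 0` on `ℚ[x,y]`. -/
def subY0 : R2 →+* R2 := (aeval ![X 0, 0] : R2 →ₐ[ℚ] R2).toRingHom

/-- Let `F ∈ ℚ[x,y][[t]]` be the (unique) solution of
`F = 1 + t(x+y)F + tΔₓF + tΔ_yF`. Then, in `ℚ(x,y)[[t]]`,
`xy(1 − tS)·F(x,y;t) = xy − t·x·F(x,0;t) − t·y·F(0,y;t)` where
`S = x + y + 1/x + 1/y`. Here `Dx` and `Dy` are the discrete derivatives,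
characterized by `x·ΔₓF = F − F(0,y;t)` and `y·Δ_yF = F − F(x,0;t)`. -/
theorem stmt9
    (Dx Dy : PowerSeries R2 → PowerSeries R2)
    (hDx : ∀ G : PowerSeries R2,
      PowerSeries.C (R := R2) (X 0) * Dx G = G - PowerSeries.map subX0 G)
    (hDy : ∀ G : PowerSeries R2,
      PowerSeries.C (R := R2) (X 1) * Dy G = G - PowerSeries.map subY0 G)
    (F : PowerSeries R2)
    (hF : F = 1 + PowerSeries.X * PowerSeries.C (R := R2) (X 0 + X 1) * F +
      PowerSeries.X * Dx F + PowerSeries.X * Dy F) :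
    PowerSeries.C (R := K2) (φ (X 0) * φ (X 1)) *
        (1 - PowerSeries.X * PowerSeries.C (R := K2)
          (φ (X 0) + φ (X 1) + (φ (X 0))⁻¹ + (φ (X 1))⁻¹)) *
        PowerSeries.map φ F =
      PowerSeries.C (R := K2) (φ (X 0) * φ (X 1)) -
        PowerSeries.X * PowerSeries.C (R := K2) (φ (X 0)) *
          PowerSeries.map (sub (φ (X 0)) 0) F -
        PowerSeries.X * PowerSeries.C (R := K2) (φ (X 1)) *
          PowerSeries.map (sub 0 (φ (X 1))) F := by

  set a := φ (X 0) with ha_def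
  set b := φ (X 1) with hb_def
  have hinj : Function.Injective φ := IsFractionRing.injective R2 K2
  have ha : a ≠ 0 := by
    simp only [ha_def]
    intro h
    exact MvPolynomial.X_ne_zero (0 : Fin 2) (hinj (by simpa using h))
  have hb : b ≠ 0 := by
    simp only [hb_def]
    intro h
    exact MvPolynomial.X_ne_zero (1 : Fin 2) (hinj (by simpa using h))
  have hca : PowerSeries.C (R := K2) a * PowerSeries.C (R := K2) a⁻¹ = 1 := by
    rw [← map_mul, mul_inv_cancel₀ ha, map_one]
  have hcb : PowerSeries.C (R := K2) b * PowerSeries.C (R := K2) b⁻¹ = 1 := by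
    rw [← map_mul, mul_inv_cancel₀ hb, map_one]
  have hcompX : φ.comp subX0 = sub 0 b := by
    apply MvPolynomial.ringHom_ext
    · intro r
      exact RingHom.congr_fun (Subsingleton.elim ((φ.comp subX0).comp (C : ℚ →+* R2))
        ((sub 0 b).comp (C : ℚ →+* R2))) r
    · intro i
      fin_cases i <;> simp [subX0, sub, φ, hb_def]
  have hcompY : φ.comp subY0 = sub a 0 := by
    apply MvPolynomial.ringHom_ext
    · intro r
      exact RingHom.congr_fun (Subsingleton.elim ((φ.comp subY0).comp (C : ℚ →+* R2))
        ((sub a 0).comp (C : ℚ →+* R2))) r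
    · intro i
      fin_cases i <;> simp [subY0, sub, φ, ha_def]
  have hmapX : PowerSeries.map φ (PowerSeries.map subX0 F) = PowerSeries.map (sub 0 b) F := by
    ext n
    simp only [PowerSeries.coeff_map]
    rw [← hcompX]; rfl
  have hmapY : PowerSeries.map φ (PowerSeries.map subY0 F) = PowerSeries.map (sub a 0) F := by
    ext n
    simp only [PowerSeries.coeff_map]
    rw [← hcompY]; rfl
  have E1 := congrArg (PowerSeries.map φ) hF
  have E2 := congrArg (PowerSeries.map φ) (hDx F)
  have E3 := congrArg (PowerSeries.map φ) (hDy F)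
  simp only [map_add, map_mul, map_one, map_sub, PowerSeries.map_C, PowerSeries.map_X,
    hmapX, hmapY, ← ha_def, ← hb_def] at E1 E2 E3
  simp only [map_mul, map_add] at E1 E2 E3 ⊢
  linear_combination (PowerSeries.C (R := K2) a * PowerSeries.C (R := K2) b) * E1
    + (PowerSeries.X * PowerSeries.C (R := K2) b) * E2
    + (PowerSeries.X * PowerSeries.C (R := K2) a) * E3
    - (PowerSeries.X * PowerSeries.C (R := K2) b * PowerSeries.map φ F) * hca
    - (PowerSeries.X * PowerSeries.C (R := K2) a * PowerSeries.map φ F) * hcb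
end
end

section
/- Let F ∈ ℚ[x,y][[t]] be the unique solution of F = 1 + t(x+y)F + tΔₓF + tΔ_yF, and set S := x + y + 1/x + 1/y ∈ ℚ(x,y). Then, in ℚ(x,y)[[t]], xy·F(x,y;t) − (y/x)·F(1/x,y;t) + (1/(xy))·F(1/x,1/y;t) − (x/y)·F(x,1/y;t) = (xy − y/x + 1/(xy) − x/y)·(1 − tS)^{−1}, where 1 − tS is invertible in ℚ(x,y)[[t]] because its constant coefficient is 1. -/
open MvPolynomial

noncomputable section

lemma psmap_map {R S T : Type*} [CommSemiring R] [CommSemiring S] [CommSemiring T]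
    (f : R →+* S) (g : S →+* T) (φ : PowerSeries R) :
    PowerSeries.map g (PowerSeries.map f φ) = PowerSeries.map (g.comp f) φ := by
  ext n
  simp [PowerSeries.coeff_map]

@[simp] lemma sub_X0 (a b : K2) : sub a b (X 0) = a := by simp [sub]
@[simp] lemma sub_X1 (a b : K2) : sub a b (X 1) = b := by simp [sub]

lemma sub_compX0 (a b : K2) : (sub a b).comp subX0 = sub 0 b := by
  apply MvPolynomial.ringHom_ext
  · intro r
    simp [sub, subX0, algebraMap_eq]
  · intro i
    fin_cases i <;> simp [sub, subX0]

lemma sub_compY0 (a b : K2) : (sub a b).comp subY0 = sub a 0 := by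
  apply MvPolynomial.ringHom_ext
  · intro r
    simp [sub, subY0, algebraMap_eq]
  · intro i
    fin_cases i <;> simp [sub, subY0]

lemma sub_xy : sub (φ (X 0)) (φ (X 1)) = φ := by
  apply MvPolynomial.ringHom_ext
  · intro r
    simp only [sub, coe_eval₂Hom, eval₂_C, RingHom.coe_comp, Function.comp_apply]
  · intro i
    fin_cases i <;> simp [sub]

lemma key (Dx Dy : PowerSeries R2 → PowerSeries R2)
    (hDx : ∀ G : PowerSeries R2,
      (PowerSeries.C : R2 →+* PowerSeries R2) (X 0) * Dx G = G - PowerSeries.map subX0 G)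
    (hDy : ∀ G : PowerSeries R2,
      (PowerSeries.C : R2 →+* PowerSeries R2) (X 1) * Dy G = G - PowerSeries.map subY0 G)
    (F : PowerSeries R2)
    (hF : F = 1 + PowerSeries.X * (PowerSeries.C : R2 →+* PowerSeries R2) (X 0 + X 1) * F +
      PowerSeries.X * Dx F + PowerSeries.X * Dy F) (a b : K2) :
    ((PowerSeries.C : K2 →+* PowerSeries K2) (a*b) - PowerSeries.X * (PowerSeries.C : K2 →+* PowerSeries K2) (a*b*(a+b)+a+b)) *
      PowerSeries.map (sub a b) F
    = (PowerSeries.C : K2 →+* PowerSeries K2) (a*b)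
      - PowerSeries.X * (PowerSeries.C : K2 →+* PowerSeries K2) b * PowerSeries.map (sub 0 b) F
      - PowerSeries.X * (PowerSeries.C : K2 →+* PowerSeries K2) a * PowerSeries.map (sub a 0) F := by
  have hm := congrArg (PowerSeries.map (sub a b)) hF
  have h1 := congrArg (PowerSeries.map (sub a b)) (hDx F)
  have h2 := congrArg (PowerSeries.map (sub a b)) (hDy F)
  simp only [map_add, map_mul, map_one, map_sub, PowerSeries.map_X, PowerSeries.map_C,
    psmap_map, sub_compX0, sub_compY0, sub_X0, sub_X1] at hm h1 h2
  simp only [map_add, map_mul]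
  linear_combination ((PowerSeries.C : K2 →+* PowerSeries K2) a * (PowerSeries.C : K2 →+* PowerSeries K2) b) * hm
    + PowerSeries.X * (PowerSeries.C : K2 →+* PowerSeries K2) b * h1 + PowerSeries.X * (PowerSeries.C : K2 →+* PowerSeries K2) a * h2

set_option maxHeartbeats 1000000 in
/-- Let `F ∈ ℚ[x,y][[t]]` be the (unique) solution of
`F = 1 + t(x+y)F + tΔₓF + tΔ_yF`, and `S = x + y + 1/x + 1/y ∈ ℚ(x,y)`. Then, in
`ℚ(x,y)[[t]]`, the orbit-sum identity
`xy·F(x,y;t) − (y/x)·F(1/x,y;t) + (1/(xy))·F(1/x,1/y;t) − (x/y)·F(x,1/y;t)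
  = (xy − y/x + 1/(xy) − x/y)·(1 − tS)⁻¹` holds, the inverse being taken in the
power series ring over the field `ℚ(x,y)`. Here `Dx` and `Dy` are the discrete
derivatives, characterized by `x·ΔₓF = F − F(0,y;t)` and `y·Δ_yF = F − F(x,0;t)`. -/
theorem stmt10
    (Dx Dy : PowerSeries R2 → PowerSeries R2)
    (hDx : ∀ G : PowerSeries R2,
      (PowerSeries.C : R2 →+* PowerSeries R2) (X 0) * Dx G = G - PowerSeries.map subX0 G)
    (hDy : ∀ G : PowerSeries R2,
      (PowerSeries.C : R2 →+* PowerSeries R2) (X 1) * Dy G = G - PowerSeries.map subY0 G)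
    (F : PowerSeries R2)
    (hF : F = 1 + PowerSeries.X * (PowerSeries.C : R2 →+* PowerSeries R2) (X 0 + X 1) * F +
      PowerSeries.X * Dx F + PowerSeries.X * Dy F) :
    (PowerSeries.C : K2 →+* PowerSeries K2) (φ (X 0) * φ (X 1)) * PowerSeries.map φ F -
      (PowerSeries.C : K2 →+* PowerSeries K2) (φ (X 1) / φ (X 0)) *
        PowerSeries.map (sub (φ (X 0))⁻¹ (φ (X 1))) F +
      (PowerSeries.C : K2 →+* PowerSeries K2) (1 / (φ (X 0) * φ (X 1))) *
        PowerSeries.map (sub (φ (X 0))⁻¹ (φ (X 1))⁻¹) F -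
      (PowerSeries.C : K2 →+* PowerSeries K2) (φ (X 0) / φ (X 1)) *
        PowerSeries.map (sub (φ (X 0)) (φ (X 1))⁻¹) F =
    (PowerSeries.C : K2 →+* PowerSeries K2)
        (φ (X 0) * φ (X 1) - φ (X 1) / φ (X 0) + 1 / (φ (X 0) * φ (X 1)) -
          φ (X 0) / φ (X 1)) *
      (1 - PowerSeries.X * (PowerSeries.C : K2 →+* PowerSeries K2)
          (φ (X 0) + φ (X 1) + (φ (X 0))⁻¹ + (φ (X 1))⁻¹))⁻¹ := by
  have hx : φ (X 0) ≠ 0 :=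
    (map_ne_zero_iff φ (IsFractionRing.injective R2 K2)).mpr (X_ne_zero 0)
  have hy : φ (X 1) ≠ 0 :=
    (map_ne_zero_iff φ (IsFractionRing.injective R2 K2)).mpr (X_ne_zero 1)
  set x := φ (X 0) with hxdef
  set y := φ (X 1) with hydef
  set Sv : K2 := x + y + x⁻¹ + y⁻¹ with hSv
  have e1 := key Dx Dy hDx hDy F hF x y
  have e2 := key Dx Dy hDx hDy F hF x⁻¹ y
  have e3 := key Dx Dy hDx hDy F hF x⁻¹ y⁻¹
  have e4 := key Dx Dy hDx hDy F hF x y⁻¹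
  rw [sub_xy] at e1
  have hxi : x * x⁻¹ = 1 := mul_inv_cancel₀ hx
  have hyi : y * y⁻¹ = 1 := mul_inv_cancel₀ hy
  have hA1 : x*y*(x+y)+x+y = x*y*Sv := by
    rw [hSv]; linear_combination (-y) * hxi + (-x) * hyi
  have hA2 : x⁻¹*y*(x⁻¹+y)+x⁻¹+y = x⁻¹*y*Sv := by
    rw [hSv]; linear_combination (-y) * hxi + (-x⁻¹) * hyi
  have hA3 : x⁻¹*y⁻¹*(x⁻¹+y⁻¹)+x⁻¹+y⁻¹ = x⁻¹*y⁻¹*Sv := by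
    rw [hSv]; linear_combination (-y⁻¹) * hxi + (-x⁻¹) * hyi
  have hA4 : x*y⁻¹*(x+y⁻¹)+x+y⁻¹ = x*y⁻¹*Sv := by
    rw [hSv]; linear_combination (-y⁻¹) * hxi + (-x) * hyi
  rw [hA1] at e1
  rw [hA2] at e2
  rw [hA3] at e3
  rw [hA4] at e4
  have hc1 : y / x = x⁻¹ * y := by rw [div_eq_mul_inv, mul_comm]
  have hc2 : 1 / (x * y) = x⁻¹ * y⁻¹ := by rw [one_div, mul_inv]
  have hc3 : x / y = x * y⁻¹ := div_eq_mul_inv x y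
  rw [hc1, hc2, hc3]
  have hK : (PowerSeries.constantCoeff : PowerSeries K2 →+* K2)
      (1 - PowerSeries.X * (PowerSeries.C : K2 →+* PowerSeries K2) Sv) ≠ 0 := by
    simp
  have hsum : (1 - PowerSeries.X * (PowerSeries.C : K2 →+* PowerSeries K2) Sv) *
      ((PowerSeries.C : K2 →+* PowerSeries K2) (x * y) * PowerSeries.map φ F -
        (PowerSeries.C : K2 →+* PowerSeries K2) (x⁻¹ * y) * PowerSeries.map (sub x⁻¹ y) F +
        (PowerSeries.C : K2 →+* PowerSeries K2) (x⁻¹ * y⁻¹) * PowerSeries.map (sub x⁻¹ y⁻¹) F -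
        (PowerSeries.C : K2 →+* PowerSeries K2) (x * y⁻¹) * PowerSeries.map (sub x y⁻¹) F) =
      (PowerSeries.C : K2 →+* PowerSeries K2) (x * y - x⁻¹ * y + x⁻¹ * y⁻¹ - x * y⁻¹) := by
    simp only [map_add, map_mul, map_sub] at e1 e2 e3 e4 ⊢
    linear_combination e1 - e2 + e3 - e4
  calc
    (PowerSeries.C : K2 →+* PowerSeries K2) (x * y) * PowerSeries.map φ F -
        (PowerSeries.C : K2 →+* PowerSeries K2) (x⁻¹ * y) * PowerSeries.map (sub x⁻¹ y) F +
        (PowerSeries.C : K2 →+* PowerSeries K2) (x⁻¹ * y⁻¹) * PowerSeries.map (sub x⁻¹ y⁻¹) F -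
        (PowerSeries.C : K2 →+* PowerSeries K2) (x * y⁻¹) * PowerSeries.map (sub x y⁻¹) F
      = ((PowerSeries.C : K2 →+* PowerSeries K2) (x * y) * PowerSeries.map φ F -
          (PowerSeries.C : K2 →+* PowerSeries K2) (x⁻¹ * y) * PowerSeries.map (sub x⁻¹ y) F +
          (PowerSeries.C : K2 →+* PowerSeries K2) (x⁻¹ * y⁻¹) * PowerSeries.map (sub x⁻¹ y⁻¹) F -
          (PowerSeries.C : K2 →+* PowerSeries K2) (x * y⁻¹) * PowerSeries.map (sub x y⁻¹) F) *
        ((1 - PowerSeries.X * (PowerSeries.C : K2 →+* PowerSeries K2) Sv) *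
          (1 - PowerSeries.X * (PowerSeries.C : K2 →+* PowerSeries K2) Sv)⁻¹) := by
        rw [PowerSeries.mul_inv_cancel _ hK, mul_one]
    _ = ((1 - PowerSeries.X * (PowerSeries.C : K2 →+* PowerSeries K2) Sv) *
          ((PowerSeries.C : K2 →+* PowerSeries K2) (x * y) * PowerSeries.map φ F -
            (PowerSeries.C : K2 →+* PowerSeries K2) (x⁻¹ * y) * PowerSeries.map (sub x⁻¹ y) F +
            (PowerSeries.C : K2 →+* PowerSeries K2) (x⁻¹ * y⁻¹) * PowerSeries.map (sub x⁻¹ y⁻¹) F -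
            (PowerSeries.C : K2 →+* PowerSeries K2) (x * y⁻¹) * PowerSeries.map (sub x y⁻¹) F)) *
        (1 - PowerSeries.X * (PowerSeries.C : K2 →+* PowerSeries K2) Sv)⁻¹ := by ring
    _ = (PowerSeries.C : K2 →+* PowerSeries K2) (x * y - x⁻¹ * y + x⁻¹ * y⁻¹ - x * y⁻¹) *
        (1 - PowerSeries.X * (PowerSeries.C : K2 →+* PowerSeries K2) Sv)⁻¹ := by rw [hsum]
end
end

section
/- Let F ∈ ℚ[x,y][[t]] be the unique solution of F = 1 + t(x+y)F + tΔₓF + tΔ_yF. In the Laurent polynomial ring L := ℚ[ℤ²] (the group algebra of ℤ² over ℚ, with x^i y^j denoting the basis element indexed by (i,j) ∈ ℤ²), set S := x + y + x^{−1} + y^{−1} and R := xy − x^{−1}y + x^{−1}y^{−1} − xy^{−1}. Then for all natural numbers i, j, n, the coefficient of the monomial x^i y^j in the polynomial [tⁿ]F ∈ ℚ[x,y] equals the coefficient of x^{i+1} y^{j+1} in R·Sⁿ ∈ L. -/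
open MvPolynomial

noncomputable section

/-- The Laurent polynomial ring `ℚ[ℤ²]`, the group algebra of `ℤ²` over `ℚ`; the
monomial `x^i y^j` is the basis element indexed by `(i, j)`. -/
abbrev LP : Type := AddMonoidAlgebra ℚ (ℤ × ℤ)

/-- The monomial `x^i y^j` of `ℚ[ℤ²]`. -/
def mono (i j : ℤ) : LP := AddMonoidAlgebra.single (i, j) (1 : ℚ)

lemma LP.add_apply (f g : LP) (p : ℤ × ℤ) : (f + g).coeff p = f.coeff p + g.coeff p :=
  Finsupp.add_apply f.coeff g.coeff p

lemma LP.sub_apply (f g : LP) (p : ℤ × ℤ) : (f - g).coeff p = f.coeff p - g.coeff p :=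
  Finsupp.sub_apply f.coeff g.coeff p

lemma LP.single_apply (q : ℤ × ℤ) (c : ℚ) (p : ℤ × ℤ) :
    (AddMonoidAlgebra.single q c : LP).coeff p = if q = p then c else 0 :=
  Finsupp.single_apply

lemma mulS_apply (S : LP)
    (hS : S = mono 1 0 + mono 0 1 + mono (-1) 0 + mono 0 (-1))
    (A : LP) (x y : ℤ) :
    (A * S).coeff (x, y) = A.coeff (x - 1, y) + A.coeff (x, y - 1) + A.coeff (x + 1, y) + A.coeff (x, y + 1) := by
  subst hS
  simp only [mul_add, mono, Finsupp.add_apply, AddMonoidAlgebra.coeff_mul_single_apply, ← sub_eq_add_neg, mul_one,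
    Prod.mk_sub_mk, sub_zero, sub_neg_eq_add, LP.add_apply]

lemma coeff_subX0 (P : R2) : ∀ (m : Fin 2 →₀ ℕ), m 0 ≠ 0 →
    MvPolynomial.coeff m (subX0 P) = 0 := by
  induction P using MvPolynomial.induction_on with
  | C a =>
    intro m hm
    rw [show subX0 (C a) = C a by simp [subX0], MvPolynomial.coeff_C, if_neg]
    rintro rfl
    simp at hm
  | add p q hp hq =>
    intro m hm
    rw [map_add, MvPolynomial.coeff_add, hp m hm, hq m hm, add_zero]
  | mul_X p i hp =>
    intro m hm
    rw [map_mul]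
    fin_cases i
    · show MvPolynomial.coeff m (subX0 p * subX0 (X 0)) = 0
      rw [show subX0 (X 0) = 0 by simp [subX0], mul_zero, MvPolynomial.coeff_zero]
    · show MvPolynomial.coeff m (subX0 p * subX0 (X 1)) = 0
      rw [show subX0 (X 1) = X 1 by simp [subX0], MvPolynomial.coeff_mul_X']
      split_ifs with h
      · apply hp
        simpa [Finsupp.tsub_apply, Finsupp.single_apply] using hm
      · rfl

lemma coeff_subY0 (P : R2) : ∀ (m : Fin 2 →₀ ℕ), m 1 ≠ 0 →
    MvPolynomial.coeff m (subY0 P) = 0 := by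
  induction P using MvPolynomial.induction_on with
  | C a =>
    intro m hm
    rw [show subY0 (C a) = C a by simp [subY0], MvPolynomial.coeff_C, if_neg]
    rintro rfl
    simp at hm
  | add p q hp hq =>
    intro m hm
    rw [map_add, MvPolynomial.coeff_add, hp m hm, hq m hm, add_zero]
  | mul_X p i hp =>
    intro m hm
    rw [map_mul]
    fin_cases i
    · show MvPolynomial.coeff m (subY0 p * subY0 (X 0)) = 0
      rw [show subY0 (X 0) = X 0 by simp [subY0], MvPolynomial.coeff_mul_X']
      split_ifs with h
      · apply hp
        simpa [Finsupp.tsub_apply, Finsupp.single_apply] using hm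
      · rfl
    · show MvPolynomial.coeff m (subY0 p * subY0 (X 1)) = 0
      rw [show subY0 (X 1) = 0 by simp [subY0], mul_zero, MvPolynomial.coeff_zero]

lemma antiX (S R : LP)
    (hS : S = mono 1 0 + mono 0 1 + mono (-1) 0 + mono 0 (-1))
    (hR : R = mono 1 1 - mono (-1) 1 + mono (-1) (-1) - mono 1 (-1)) (n : ℕ) :
    ∀ x y : ℤ, (R * S ^ n).coeff (-x, y) = -((R * S ^ n).coeff (x, y)) := by
  induction n with
  | zero =>
    intro x y
    rw [pow_zero, mul_one, hR]
    simp only [mono, LP.sub_apply, LP.add_apply, LP.single_apply, Prod.mk.injEq]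
    split_ifs <;> norm_num <;> omega
  | succ n ih =>
    intro x y
    rw [pow_succ, ← mul_assoc, mulS_apply S hS, mulS_apply S hS,
      show -x - 1 = -(x + 1) by ring, show -x + 1 = -(x - 1) by ring,
      ih, ih, ih, ih]
    ring

lemma antiY (S R : LP)
    (hS : S = mono 1 0 + mono 0 1 + mono (-1) 0 + mono 0 (-1))
    (hR : R = mono 1 1 - mono (-1) 1 + mono (-1) (-1) - mono 1 (-1)) (n : ℕ) :
    ∀ x y : ℤ, (R * S ^ n).coeff (x, -y) = -((R * S ^ n).coeff (x, y)) := by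
  induction n with
  | zero =>
    intro x y
    rw [pow_zero, mul_one, hR]
    simp only [mono, LP.sub_apply, LP.add_apply, LP.single_apply, Prod.mk.injEq]
    split_ifs <;> norm_num <;> omega
  | succ n ih =>
    intro x y
    rw [pow_succ, ← mul_assoc, mulS_apply S hS, mulS_apply S hS,
      show -y - 1 = -(y + 1) by ring, show -y + 1 = -(y - 1) by ring,
      ih, ih, ih, ih]
    ring

lemma zeroX (S R : LP)
    (hS : S = mono 1 0 + mono 0 1 + mono (-1) 0 + mono 0 (-1))
    (hR : R = mono 1 1 - mono (-1) 1 + mono (-1) (-1) - mono 1 (-1)) (n : ℕ)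
    (y : ℤ) : (R * S ^ n).coeff (0, y) = 0 := by
  have h := antiX S R hS hR n 0 y
  rw [neg_zero] at h
  linarith

lemma zeroY (S R : LP)
    (hS : S = mono 1 0 + mono 0 1 + mono (-1) 0 + mono 0 (-1))
    (hR : R = mono 1 1 - mono (-1) 1 + mono (-1) (-1) - mono 1 (-1)) (n : ℕ)
    (x : ℤ) : (R * S ^ n).coeff (x, 0) = 0 := by
  have h := antiY S R hS hR n x 0
  rw [neg_zero] at h
  linarith

/-- Let `F ∈ ℚ[x,y][[t]]` be the (unique) solution of
`F = 1 + t(x+y)F + tΔₓF + tΔ_yF`. With `S = x + y + x⁻¹ + y⁻¹` and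
`R = xy − x⁻¹y + x⁻¹y⁻¹ − xy⁻¹` in the Laurent polynomial ring `ℚ[ℤ²]`, the
coefficient of `x^i y^j` in `[tⁿ]F` equals the coefficient of `x^{i+1} y^{j+1}` in
`R·Sⁿ`, for all `i, j, n ∈ ℕ`. (This is the statement
`xyF(x,y) = [x^> y^>] (xy − x⁻¹y + x⁻¹y⁻¹ − xy⁻¹)/(1 − tS)`, coefficientwise.)
Here `Dx` and `Dy` are the discrete derivatives, characterized by
`x·ΔₓF = F − F(0,y;t)` and `y·Δ_yF = F − F(x,0;t)`. -/
theorem stmt11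
    (Dx Dy : PowerSeries R2 → PowerSeries R2)
    (hDx : ∀ G : PowerSeries R2,
      PowerSeries.C (R := R2) (X 0) * Dx G = G - PowerSeries.map subX0 G)
    (hDy : ∀ G : PowerSeries R2,
      PowerSeries.C (R := R2) (X 1) * Dy G = G - PowerSeries.map subY0 G)
    (F : PowerSeries R2)
    (hF : F = 1 + PowerSeries.X * PowerSeries.C (R := R2) (X 0 + X 1) * F +
      PowerSeries.X * Dx F + PowerSeries.X * Dy F)
    (S R : LP)
    (hS : S = mono 1 0 + mono 0 1 + mono (-1) 0 + mono 0 (-1))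
    (hR : R = mono 1 1 - mono (-1) 1 + mono (-1) (-1) - mono 1 (-1)) :
    ∀ i j n : ℕ,
      MvPolynomial.coeff (Finsupp.single 0 i + Finsupp.single 1 j)
          (PowerSeries.coeff (R := R2) n F) =
        (R * S ^ n).coeff ((i : ℤ) + 1, (j : ℤ) + 1) := by
  have hc0 : PowerSeries.coeff (R := R2) 0 F = (1 : R2) := by
    conv_lhs => rw [hF]
    simp [PowerSeries.coeff_zero_eq_constantCoeff, map_add, map_mul]
  have hrec : ∀ n : ℕ, PowerSeries.coeff (R := R2) (n+1) F =
      (X 0 + X 1) * PowerSeries.coeff (R := R2) n F +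
      PowerSeries.coeff (R := R2) n (Dx F) + PowerSeries.coeff (R := R2) n (Dy F) := by
    intro n
    conv_lhs => rw [hF]
    rw [map_add, map_add, map_add, mul_assoc, PowerSeries.coeff_succ_X_mul,
      PowerSeries.coeff_succ_X_mul, PowerSeries.coeff_succ_X_mul,
      PowerSeries.coeff_C_mul, PowerSeries.coeff_one, if_neg (Nat.succ_ne_zero n), zero_add]
  have hdx : ∀ (n i j : ℕ),
      MvPolynomial.coeff (Finsupp.single 0 i + Finsupp.single 1 j)
        (PowerSeries.coeff (R := R2) n (Dx F)) =
      MvPolynomial.coeff (Finsupp.single 0 (i+1) + Finsupp.single 1 j)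
        (PowerSeries.coeff (R := R2) n F) := by
    intro n i j
    have h := congrArg (fun G => MvPolynomial.coeff
      (Finsupp.single (0 : Fin 2) (i+1) + Finsupp.single 1 j)
      (PowerSeries.coeff (R := R2) n G)) (hDx F)
    simp only [map_sub, PowerSeries.coeff_C_mul, PowerSeries.coeff_map,
      MvPolynomial.coeff_sub] at h
    rw [coeff_subX0 _ _ (by simp [Finsupp.single_apply]), sub_zero] at h
    have hm : (Finsupp.single (0 : Fin 2) (i+1) + Finsupp.single 1 j)
        = Finsupp.single (0 : Fin 2) 1 + (Finsupp.single 0 i + Finsupp.single 1 j) := by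
      ext a
      fin_cases a <;> simp [Finsupp.single_apply] <;> omega
    rw [hm, MvPolynomial.coeff_X_mul] at h
    rw [hm, ← h]
  have hdy : ∀ (n i j : ℕ),
      MvPolynomial.coeff (Finsupp.single 0 i + Finsupp.single 1 j)
        (PowerSeries.coeff (R := R2) n (Dy F)) =
      MvPolynomial.coeff (Finsupp.single 0 i + Finsupp.single 1 (j+1))
        (PowerSeries.coeff (R := R2) n F) := by
    intro n i j
    have h := congrArg (fun G => MvPolynomial.coeff
      (Finsupp.single (0 : Fin 2) i + Finsupp.single 1 (j+1))
      (PowerSeries.coeff (R := R2) n G)) (hDy F)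
    simp only [map_sub, PowerSeries.coeff_C_mul, PowerSeries.coeff_map,
      MvPolynomial.coeff_sub] at h
    rw [coeff_subY0 _ _ (by simp [Finsupp.single_apply]), sub_zero] at h
    have hm : (Finsupp.single (0 : Fin 2) i + Finsupp.single 1 (j+1))
        = Finsupp.single (1 : Fin 2) 1 + (Finsupp.single 0 i + Finsupp.single 1 j) := by
      ext a
      fin_cases a <;> simp [Finsupp.single_apply] <;> omega
    rw [hm, MvPolynomial.coeff_X_mul] at h
    rw [hm, ← h]
  intro i j n
  induction n generalizing i j with
  | zero =>
    rw [hc0, pow_zero, mul_one, MvPolynomial.coeff_one, hR]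
    simp only [mono, LP.sub_apply, LP.add_apply, LP.single_apply, Prod.mk.injEq]
    have h0 : (0 = (Finsupp.single (0:Fin 2) i + Finsupp.single 1 j)) ↔ (i = 0 ∧ j = 0) := by
      constructor
      · intro h
        have h1 := DFunLike.congr_fun h 0
        have h2 := DFunLike.congr_fun h 1
        simp [Finsupp.single_apply] at h1 h2
        omega
      · rintro ⟨rfl, rfl⟩
        simp
    rw [if_congr h0 rfl rfl]
    split_ifs <;> first | (exfalso; omega) | norm_num
  | succ n ih =>
    have hx : MvPolynomial.coeff (Finsupp.single 0 i + Finsupp.single 1 j)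
        (X 0 * PowerSeries.coeff (R := R2) n F) = (R * S ^ n).coeff ((i:ℤ), (j:ℤ)+1) := by
      rw [MvPolynomial.coeff_X_mul']
      by_cases hi : i = 0
      · subst hi
        rw [if_neg (by simp [Finsupp.mem_support_iff, Finsupp.single_apply])]
        rw [show ((0:ℕ):ℤ) = (0:ℤ) by norm_num, zeroX S R hS hR]
      · rw [if_pos (by simp [Finsupp.mem_support_iff, Finsupp.single_apply]; omega)]
        rw [show (Finsupp.single (0:Fin 2) i + Finsupp.single 1 j) - Finsupp.single 0 1
            = Finsupp.single (0:Fin 2) (i-1) + Finsupp.single 1 j from by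
          ext a
          fin_cases a <;> simp [Finsupp.tsub_apply, Finsupp.single_apply]]
        rw [ih (i-1) j, show ((i-1:ℕ):ℤ) + 1 = (i:ℤ) from by omega]
    have hy : MvPolynomial.coeff (Finsupp.single 0 i + Finsupp.single 1 j)
        (X 1 * PowerSeries.coeff (R := R2) n F) = (R * S ^ n).coeff ((i:ℤ)+1, (j:ℤ)) := by
      rw [MvPolynomial.coeff_X_mul']
      by_cases hj : j = 0
      · subst hj
        rw [if_neg (by simp [Finsupp.mem_support_iff, Finsupp.single_apply])]
        rw [show ((0:ℕ):ℤ) = (0:ℤ) by norm_num, zeroY S R hS hR]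
      · rw [if_pos (by simp [Finsupp.mem_support_iff, Finsupp.single_apply]; omega)]
        rw [show (Finsupp.single (0:Fin 2) i + Finsupp.single 1 j) - Finsupp.single 1 1
            = Finsupp.single (0:Fin 2) i + Finsupp.single 1 (j-1) from by
          ext a
          fin_cases a <;> simp [Finsupp.tsub_apply, Finsupp.single_apply]]
        rw [ih i (j-1), show ((j-1:ℕ):ℤ) + 1 = (j:ℤ) from by omega]
    have hdx' : MvPolynomial.coeff (Finsupp.single 0 i + Finsupp.single 1 j)
        (PowerSeries.coeff (R := R2) n (Dx F)) = (R * S ^ n).coeff ((i:ℤ)+1+1, (j:ℤ)+1) := by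
      rw [hdx n i j, ih (i+1) j]
      push_cast
      ring_nf
    have hdy' : MvPolynomial.coeff (Finsupp.single 0 i + Finsupp.single 1 j)
        (PowerSeries.coeff (R := R2) n (Dy F)) = (R * S ^ n).coeff ((i:ℤ)+1, (j:ℤ)+1+1) := by
      rw [hdy n i j, ih i (j+1)]
      push_cast
      ring_nf
    rw [hrec n, MvPolynomial.coeff_add, MvPolynomial.coeff_add, add_mul,
      MvPolynomial.coeff_add, hx, hy, hdx', hdy', pow_succ, ← mul_assoc,
      mulS_apply S hS, show (i:ℤ)+1-1 = (i:ℤ) by ring, show (j:ℤ)+1-1 = (j:ℤ) by ring]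
end
end

section
/- Let K be a field containing the rational function field ℚ(x,y) in two variables (so that x and y are invertible in K), and let α ∈ K satisfy α² = 4x³y² + (x + y + xy + xy²)². For i ∈ {1, −1} set pᵢ(α) := (x + y + xy + xy² + iα)/(2x²y). Then p₁(α)·p₋₁(α) = −1/x (in particular pᵢ(α) ≠ 0 and is invertible in K), and for i ∈ {1, −1}, S₀(pᵢ(α), y)·S₁(pᵢ(α), y) = S₀(x, y)·S₁(x, y), where S₀(u,v) := v/u + v + u + 1 and S₁(u,v) := 1/(uv) + 1. -/
open MvPolynomial

noncomputable section

/-- Let `K` be a field containing `ℚ(x,y)` (via an embedding `f`), and let `α ∈ K`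
satisfy `α² = 4x³y² + (x + y + xy + xy²)²`. For `i ∈ {1,−1}` set
`pᵢ(α) = (x + y + xy + xy² + iα)/(2x²y)`. Then `p₁(α)·p₋₁(α) = −1/x` (in particular
`pᵢ(α) ≠ 0`), and the kernel polynomial is invariant under `x ↦ pᵢ(α)`:
`S₀(pᵢ(α), y)·S₁(pᵢ(α), y) = S₀(x, y)·S₁(x, y)` for `i ∈ {1,−1}`, where
`S₀(u,v) = v/u + v + u + 1` and `S₁(u,v) = 1/(uv) + 1`. -/
theorem stmt13 {K : Type*} [Field K] (f : K2 →+* K)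
    (x y : K) (hx : x = f (φ (X 0))) (hy : y = f (φ (X 1)))
    (α : K) (hα : α ^ 2 = 4 * x ^ 3 * y ^ 2 + (x + y + x * y + x * y ^ 2) ^ 2)
    (p : K → K) (hp : ∀ i : K, p i = (x + y + x * y + x * y ^ 2 + i * α) / (2 * x ^ 2 * y)) :
    p 1 * p (-1) = -x⁻¹ ∧
    (∀ i : K, i = 1 ∨ i = -1 → p i ≠ 0) ∧
    (∀ i : K, i = 1 ∨ i = -1 →
      (y / p i + y + p i + 1) * (1 / (p i * y) + 1) =
        (y / x + y + x + 1) * (1 / (x * y) + 1)) := by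
  have hinj : Function.Injective f := f.injective
  have hXx : (φ (X 0) : K2) ≠ 0 := by
    simp only [φ, ne_eq, map_eq_zero_iff _ (IsFractionRing.injective R2 K2)]
    exact X_ne_zero 0
  have hXy : (φ (X 1) : K2) ≠ 0 := by
    simp only [φ, ne_eq, map_eq_zero_iff _ (IsFractionRing.injective R2 K2)]
    exact X_ne_zero 1
  have hx0 : x ≠ 0 := by
    rw [hx]; exact fun h => hXx (hinj (by simpa using h))
  have hy0 : y ≠ 0 := by
    rw [hy]; exact fun h => hXy (hinj (by simpa using h))
  have hxi : x * x⁻¹ = 1 := mul_inv_cancel₀ hx0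
  have h2ne : (2 : K) ≠ 0 := by
    intro h
    have h' : f (2 : K2) = f 0 := by rw [map_ofNat, map_zero]; exact h
    exact (by norm_num : (2 : K2) ≠ 0) (hinj h')
  have h4ne : (4 : K) ≠ 0 := by
    intro h
    have h' : f (4 : K2) = f 0 := by rw [map_ofNat, map_zero]; exact h
    exact (by norm_num : (4 : K2) ≠ 0) (hinj h')
  have h2 : 2 * x ^ 2 * y ≠ 0 :=
    mul_ne_zero (mul_ne_zero h2ne (pow_ne_zero _ hx0)) hy0
  have hq : ∀ i : K, 2 * x ^ 2 * y * p i = x + y + x * y + x * y ^ 2 + i * α := by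
    intro i
    rw [hp]
    exact mul_div_cancel₀ _ h2
  have hprod : p 1 * p (-1) = -x⁻¹ := by
    have h4 : (4 : K) * x ^ 4 * y ^ 2 ≠ 0 :=
      mul_ne_zero (mul_ne_zero h4ne (pow_ne_zero _ hx0)) (pow_ne_zero _ hy0)
    apply mul_left_cancel₀ h4
    have hm : (2 * x ^ 2 * y * p 1) * (2 * x ^ 2 * y * p (-1)) =
        (x + y + x * y + x * y ^ 2 + 1 * α) * (x + y + x * y + x * y ^ 2 + (-1) * α) := by
      rw [hq 1, hq (-1)]
    linear_combination hm - hα + 4 * x ^ 3 * y ^ 2 * hxi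
  refine ⟨hprod, ?_, ?_⟩
  · intro i hi
    have hne : p 1 * p (-1) ≠ 0 := by
      rw [hprod]
      exact neg_ne_zero.mpr (inv_ne_zero hx0)
    rcases hi with rfl | rfl
    · exact left_ne_zero_of_mul hne
    · exact right_ne_zero_of_mul hne
  · intro i hi
    have hi2 : i ^ 2 = 1 := by rcases hi with rfl | rfl <;> ring
    have hq0 : p i ≠ 0 := by
      have hne : p 1 * p (-1) ≠ 0 := by
        rw [hprod]
        exact neg_ne_zero.mpr (inv_ne_zero hx0)
      rcases hi with rfl | rfl
      · exact left_ne_zero_of_mul hne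
      · exact right_ne_zero_of_mul hne
    have hkey : x ^ 2 * y * p i ^ 2 = (x + y + x * y + x * y ^ 2) * p i + x * y := by
      have h4 : (4 : K) * x ^ 2 * y ≠ 0 :=
        mul_ne_zero (mul_ne_zero h4ne (pow_ne_zero _ hx0)) hy0
      apply mul_left_cancel₀ h4
      have hm : (2 * x ^ 2 * y * p i) * (2 * x ^ 2 * y * p i) =
          (x + y + x * y + x * y ^ 2 + i * α) * (x + y + x * y + x * y ^ 2 + i * α) := by
        rw [hq i]
      linear_combination hm - 2 * (x + y + x * y + x * y ^ 2) * hq i +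
        α ^ 2 * hi2 + hα
    field_simp
    linear_combination (p i - x) * hkey
end
end
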